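/- arXiv:2211.03695 — 12 statements merged into one kernel-verified Lean document; each statement's English description precedes it below -/
import Mathlib

section
/- Let X be a real random variable on a probability space and let σ > 0 be such that P[|X| ≥ t] ≤ 2·exp(−t/σ) for all t > 0, and let c ≥ 0. Then for all t > 0 it holds that P[|X + c| ≥ t] ≤ 2·exp(−t/(σ + c/log 2)). -/
open MeasureTheory Real

/-- Adding a nonnegative constant `c` to a random variable increases its subexponential
diameter by at most `c / log 2`. -/
theorem stmt_0 {Ω : Type*} [MeasurableSpace Ω] (μ : Measure Ω) [IsProbabilityMeasure μ]
    (X : Ω → ℝ) (hX : Measurable X) (σ : ℝ) (hσ : 0 < σ) (c : ℝ) (hc : 0 ≤ c)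
    (h : ∀ t : ℝ, 0 < t → μ {ω | t ≤ |X ω|} ≤ ENNReal.ofReal (2 * Real.exp (-t / σ))) :
    ∀ t : ℝ, 0 < t →
      μ {ω | t ≤ |X ω + c|} ≤
        ENNReal.ofReal (2 * Real.exp (-t / (σ + c / Real.log 2))) := by
  intro t ht
  have hlog2 : (0:ℝ) < Real.log 2 := Real.log_pos (by norm_num)
  set σ' : ℝ := σ + c / Real.log 2 with hσ'def
  have hσ' : 0 < σ' := by positivity
  by_cases hcase : t ≤ σ' * Real.log 2
  · -- RHS is at least 1
    have h1 : (1:ℝ) ≤ 2 * Real.exp (-t / σ') := by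
      have : -Real.log 2 ≤ -t / σ' := by
        rw [neg_div, neg_le_neg_iff]
        rw [div_le_iff₀ hσ']
        linarith [mul_comm σ' (Real.log 2)]
      have := Real.exp_le_exp.mpr this
      rw [Real.exp_neg, Real.exp_log (by norm_num : (0:ℝ) < 2)] at this
      linarith
    calc μ {ω | t ≤ |X ω + c|} ≤ 1 := prob_le_one
      _ ≤ ENNReal.ofReal (2 * Real.exp (-t / σ')) := by
          rw [← ENNReal.ofReal_one]
          exact ENNReal.ofReal_le_ofReal h1
  · push_neg at hcase
    have htc : σ * Real.log 2 < t - c := by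
      have : σ' * Real.log 2 = σ * Real.log 2 + c := by
        rw [hσ'def, add_mul, div_mul_cancel₀ _ hlog2.ne']
      nlinarith
    have htc0 : 0 < t - c := by nlinarith [mul_pos hσ hlog2]
    have hsub : {ω | t ≤ |X ω + c|} ⊆ {ω | t - c ≤ |X ω|} := by
      intro ω hω
      simp only [Set.mem_setOf_eq] at hω ⊢
      have := abs_add_le (X ω) c
      rw [abs_of_nonneg hc] at this
      linarith
    have key : -(t - c) / σ ≤ -t / σ' := by
      rw [div_le_div_iff₀ hσ hσ']
      have : c * ((t - c) / Real.log 2 - σ) ≥ 0 := by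
        apply mul_nonneg hc
        rw [sub_nonneg, le_div_iff₀ hlog2]
        linarith
      have hexp : c / Real.log 2 * (t - c) - σ * c ≥ 0 := by
        have : c * ((t - c) / Real.log 2 - σ) = c / Real.log 2 * (t - c) - σ * c := by
          field_simp
        linarith [this ▸ ‹c * ((t - c) / Real.log 2 - σ) ≥ 0›]
      simp only [hσ'def]
      nlinarith
    calc μ {ω | t ≤ |X ω + c|} ≤ μ {ω | t - c ≤ |X ω|} := measure_mono hsub
      _ ≤ ENNReal.ofReal (2 * Real.exp (-(t - c) / σ)) := h (t - c) htc0
      _ ≤ ENNReal.ofReal (2 * Real.exp (-t / σ')) := by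
          apply ENNReal.ofReal_le_ofReal
          have := Real.exp_le_exp.mpr key
          linarith
end

section
/- Let X be a real random variable and let 0 < Δ ≤ 1/2 be such that P[|X| ≥ t] ≤ 2·exp(−t/Δ) for all t > 0. Then E[exp(−|X|)] ≥ 2^{−Δ}/(1 + Δ) ≥ exp(−(1 + log 2)·Δ). -/
open MeasureTheory Real

open Set

/-- Lower bound on `E[exp(-|X|)]` for a random variable `X` of subexponential diameter at
most `Δ ≤ 1/2`. -/
theorem stmt_3 {Ω : Type*} [MeasurableSpace Ω] (μ : Measure Ω) [IsProbabilityMeasure μ]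
    (X : Ω → ℝ) (hX : Measurable X) (Δ : ℝ) (hΔ0 : 0 < Δ) (hΔ : Δ ≤ 1 / 2)
    (h : ∀ t : ℝ, 0 < t → μ {ω | t ≤ |X ω|} ≤ ENNReal.ofReal (2 * Real.exp (-t / Δ))) :
    (2 : ℝ) ^ (-Δ) / (1 + Δ) ≤ ∫ ω, Real.exp (-|X ω|) ∂μ ∧
      Real.exp (-(1 + Real.log 2) * Δ) ≤ (2 : ℝ) ^ (-Δ) / (1 + Δ) := by
  have hr : (-1:ℝ) < 1/Δ := by
    have : 0 < 1/Δ := by positivity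
    linarith
  set s₀ : ℝ := (2:ℝ) ^ (-Δ) with hs₀def
  have hs₀pos : 0 < s₀ := Real.rpow_pos_of_pos two_pos _
  have hs₀lt1 : s₀ < 1 := Real.rpow_lt_one_of_one_lt_of_neg one_lt_two (by linarith)
  constructor
  · -- main inequality
    set f : Ω → ℝ := fun ω => Real.exp (-|X ω|) with hfdef
    have hfm : Measurable f := Real.measurable_exp.comp hX.abs.neg
    have hfnn : ∀ ω, 0 ≤ f ω := fun ω => (Real.exp_pos _).le
    have hfle1 : ∀ ω, f ω ≤ 1 := fun ω => by
      rw [hfdef, ← Real.exp_zero]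
      exact Real.exp_le_exp.2 (neg_nonpos.2 (abs_nonneg _))
    -- layer cake
    have key : ∫⁻ ω, ENNReal.ofReal (f ω) ∂μ = ∫⁻ t in Ioi (0:ℝ), μ {a | t < f a} :=
      lintegral_eq_lintegral_meas_lt μ (ae_of_all _ hfnn) hfm.aemeasurable
    have hfin : ∫⁻ ω, ENNReal.ofReal (f ω) ∂μ ≤ 1 := by
      calc ∫⁻ ω, ENNReal.ofReal (f ω) ∂μ ≤ ∫⁻ _, 1 ∂μ :=
            lintegral_mono fun ω => ENNReal.ofReal_le_one.2 (hfle1 ω)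
        _ = 1 := by simp
    -- pointwise bound on Ioc 0 s₀
    have hpoint : ∀ t ∈ Ioc (0:ℝ) s₀,
        ENNReal.ofReal (1 - 2 * t ^ (1/Δ)) ≤ μ {a | t < f a} := by
      intro t ht
      have ht1 : t < 1 := lt_of_le_of_lt ht.2 hs₀lt1
      have hlog : 0 < -Real.log t := by
        have := Real.log_neg ht.1 ht1
        linarith
      have hset : {a | f a ≤ t} = {ω | -Real.log t ≤ |X ω|} := by
        ext ω
        simp only [hfdef, Set.mem_setOf_eq]
        rw [← Real.le_log_iff_exp_le ht.1, neg_le]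
      have hmeas : MeasurableSet {a | f a ≤ t} := hfm measurableSet_Iic
      have hcompl : μ {a | t < f a} = 1 - μ {a | f a ≤ t} := by
        have hs : {a | t < f a} = {a | f a ≤ t}ᶜ := by
          ext a; simp [not_le]
        rw [hs, measure_compl hmeas (measure_ne_top _ _), measure_univ]
      have hμle : μ {a | f a ≤ t} ≤ ENNReal.ofReal (2 * t ^ (1/Δ)) := by
        rw [hset]
        have h2 := h (-Real.log t) hlog
        have : Real.exp (-(-Real.log t) / Δ) = t ^ (1/Δ) := by
          rw [Real.rpow_def_of_pos ht.1, neg_neg]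
          ring_nf
        rwa [this] at h2
      calc ENNReal.ofReal (1 - 2 * t ^ (1/Δ))
          = 1 - ENNReal.ofReal (2 * t ^ (1/Δ)) := by
            rw [ENNReal.ofReal_sub _ (mul_nonneg (by norm_num) (Real.rpow_nonneg ht.1.le _)), ENNReal.ofReal_one]
        _ ≤ 1 - μ {a | f a ≤ t} := tsub_le_tsub_left hμle 1
        _ = μ {a | t < f a} := hcompl.symm
    -- integrability of the comparison function
    have hI : IntervalIntegrable (fun t : ℝ => t ^ (1/Δ)) volume 0 s₀ :=
      intervalIntegral.intervalIntegrable_rpow' hr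
    have hIg : IntervalIntegrable (fun t : ℝ => 1 - 2 * t ^ (1/Δ)) volume 0 s₀ :=
      intervalIntegrable_const.sub (hI.const_mul 2)
    have hIgOn : IntegrableOn (fun t : ℝ => 1 - 2 * t ^ (1/Δ)) (Ioc 0 s₀) volume := hIg.1
    -- the comparison integral equals the target
    have hval : ∫ t in Ioc (0:ℝ) s₀, (1 - 2 * t ^ (1/Δ)) = s₀ / (1 + Δ) := by
      rw [← intervalIntegral.integral_of_le hs₀pos.le]
      rw [intervalIntegral.integral_sub intervalIntegrable_const (hI.const_mul 2),
        intervalIntegral.integral_const, intervalIntegral.integral_const_mul,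
        integral_rpow (Or.inl hr)]
      have hz : (0:ℝ) ^ (1/Δ + 1) = 0 := Real.zero_rpow (by positivity)
      have hs : s₀ ^ (1/Δ + 1) = s₀ / 2 := by
        rw [hs₀def, ← Real.rpow_mul (by norm_num : (0:ℝ) ≤ 2)]
        have : -Δ * (1/Δ + 1) = -Δ + -1 := by field_simp; ring
        rw [this, Real.rpow_add two_pos, Real.rpow_neg_one]
        ring
      rw [hz, hs]
      have hΔ1 : 1/Δ + 1 ≠ 0 := by positivity
      have h1Δ : (1:ℝ) + Δ ≠ 0 := by positivity
      field_simp
      ring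
    -- nonnegativity of comparison function on Ioc 0 s₀
    have hgnn : ∀ t ∈ Ioc (0:ℝ) s₀, 0 ≤ 1 - 2 * t ^ (1/Δ) := by
      intro t ht
      have h1 : t ^ (1/Δ) ≤ s₀ ^ (1/Δ) := Real.rpow_le_rpow ht.1.le ht.2 (by positivity)
      have h2 : s₀ ^ (1/Δ) = 1/2 := by
        rw [hs₀def, ← Real.rpow_mul (by norm_num : (0:ℝ) ≤ 2)]
        have : -Δ * (1/Δ) = -1 := by field_simp
        rw [this, Real.rpow_neg_one]
        norm_num
      rw [h2] at h1
      linarith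
    -- chain of inequalities in ℝ≥0∞
    have hchain : ENNReal.ofReal (s₀ / (1 + Δ)) ≤ ∫⁻ ω, ENNReal.ofReal (f ω) ∂μ := by
      rw [key, ← hval,
        ofReal_integral_eq_lintegral_ofReal hIgOn
          ((ae_restrict_iff' measurableSet_Ioc).2 (ae_of_all _ hgnn))]
      calc ∫⁻ t in Ioc (0:ℝ) s₀, ENNReal.ofReal (1 - 2 * t ^ (1/Δ))
          ≤ ∫⁻ t in Ioc (0:ℝ) s₀, μ {a | t < f a} :=
            setLIntegral_mono_ae' measurableSet_Ioc (ae_of_all _ hpoint)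
        _ ≤ ∫⁻ t in Ioi (0:ℝ), μ {a | t < f a} :=
            lintegral_mono_set Ioc_subset_Ioi_self
    -- convert back to real integral
    have hint : ∫ ω, f ω ∂μ = (∫⁻ ω, ENNReal.ofReal (f ω) ∂μ).toReal :=
      integral_eq_lintegral_of_nonneg_ae (ae_of_all _ hfnn) hfm.aestronglyMeasurable
    have hnet : (ENNReal.ofReal (s₀ / (1 + Δ))).toReal ≤ (∫⁻ ω, ENNReal.ofReal (f ω) ∂μ).toReal :=
      ENNReal.toReal_mono (lt_of_le_of_lt hfin ENNReal.one_lt_top).ne hchain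
    rw [ENNReal.toReal_ofReal (by positivity)] at hnet
    rw [hint]
    exact hnet
  · -- second inequality
    have h2 : (2:ℝ) ^ (-Δ) = Real.exp (Real.log 2 * -Δ) := by
      rw [Real.rpow_def_of_pos two_pos]
    rw [hs₀def, h2, le_div_iff₀ (by linarith)]
    have h3 : Real.exp (-(1 + Real.log 2) * Δ) = Real.exp (Real.log 2 * -Δ) * Real.exp (-Δ) := by
      rw [← Real.exp_add]; ring_nf
    rw [h3]
    have h4 : (1 + Δ) ≤ Real.exp Δ := by linarith [Real.add_one_le_exp Δ]
    have h5 : Real.exp (-Δ) * (1 + Δ) ≤ 1 := by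
      rw [Real.exp_neg, inv_mul_le_iff₀ (Real.exp_pos _)]
      linarith
    nlinarith [Real.exp_pos (Real.log 2 * -Δ), Real.exp_pos (-Δ)]
end

section
/- Let X be a real random variable and let 0 < Δ ≤ 1/2 be such that P[|X| ≥ t] ≤ 2·exp(−t/Δ) for all t > 0. Then exp(|X|) is integrable and E[exp(|X|)] ≤ 2^{Δ}/(1 − Δ) ≤ exp(3·(log 2)·Δ). -/
open MeasureTheory Real Set

/-- Upper bound on `E[exp(|X|)]` for a random variable `X` of subexponential diameter at
most `Δ ≤ 1/2`; in particular `exp(|X|)` is integrable. -/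
theorem stmt_4 {Ω : Type*} [MeasurableSpace Ω] (μ : Measure Ω) [IsProbabilityMeasure μ]
    (X : Ω → ℝ) (hX : Measurable X) (Δ : ℝ) (hΔ0 : 0 < Δ) (hΔ : Δ ≤ 1 / 2)
    (h : ∀ t : ℝ, 0 < t → μ {ω | t ≤ |X ω|} ≤ ENNReal.ofReal (2 * Real.exp (-t / Δ))) :
    Integrable (fun ω => Real.exp |X ω|) μ ∧
      ∫ ω, Real.exp |X ω| ∂μ ≤ (2 : ℝ) ^ Δ / (1 - Δ) ∧
        (2 : ℝ) ^ Δ / (1 - Δ) ≤ Real.exp (3 * Real.log 2 * Δ) := by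
  have hΔ1 : Δ < 1 := by linarith
  have h1Δ : 0 < 1 - Δ := by linarith
  set c : ℝ := (2 : ℝ) ^ Δ with hcdef
  have hc1 : (1 : ℝ) < c := Real.one_lt_rpow_iff_of_pos two_pos |>.2 (Or.inl ⟨one_lt_two, hΔ0⟩)
  have hc0 : (0 : ℝ) < c := by linarith
  set p : ℝ := -(1 / Δ) with hpdef
  have hp : p < -1 := by
    rw [hpdef]
    have : 2 ≤ 1 / Δ := by
      rw [le_div_iff₀ hΔ0]; linarith
    linarith
  have hmeas : Measurable fun ω => Real.exp |X ω| := Real.measurable_exp.comp hX.abs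
  have hnn : ∀ ω, 0 ≤ Real.exp |X ω| := fun ω => (Real.exp_pos _).le
  -- layer cake
  have hlayer : ∫⁻ ω, ENNReal.ofReal (Real.exp |X ω|) ∂μ
      = ∫⁻ t in Ioi (0 : ℝ), μ {ω | t ≤ Real.exp |X ω|} :=
    lintegral_eq_lintegral_meas_le μ (Filter.Eventually.of_forall hnn) hmeas.aemeasurable
  -- split the tail integral
  have hsplit : ∫⁻ t in Ioi (0 : ℝ), μ {ω | t ≤ Real.exp |X ω|}
      = (∫⁻ t in Ioc (0 : ℝ) c, μ {ω | t ≤ Real.exp |X ω|})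
        + ∫⁻ t in Ioi c, μ {ω | t ≤ Real.exp |X ω|} := by
    rw [← Ioc_union_Ioi_eq_Ioi hc0.le,
      lintegral_union measurableSet_Ioi (Ioc_disjoint_Ioi le_rfl)]
  -- bound on the first part
  have hpart1 : (∫⁻ t in Ioc (0 : ℝ) c, μ {ω | t ≤ Real.exp |X ω|}) ≤ ENNReal.ofReal c := by
    calc (∫⁻ t in Ioc (0 : ℝ) c, μ {ω | t ≤ Real.exp |X ω|})
        ≤ ∫⁻ _ in Ioc (0 : ℝ) c, 1 := lintegral_mono fun t => prob_le_one
      _ = volume (Ioc (0 : ℝ) c) := setLIntegral_one _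
      _ = ENNReal.ofReal c := by rw [Real.volume_Ioc, sub_zero]
  -- bound on the second part
  have hub : ∀ t ∈ Ioi c, μ {ω | t ≤ Real.exp |X ω|} ≤ ENNReal.ofReal (2 * t ^ p) := by
    intro t ht
    have ht1 : (1 : ℝ) < t := lt_trans hc1 ht
    have ht0 : (0 : ℝ) < t := by linarith
    have hlogt : 0 < Real.log t := Real.log_pos ht1
    have hset : {ω | t ≤ Real.exp |X ω|} = {ω | Real.log t ≤ |X ω|} := by
      ext ω; exact (Real.log_le_iff_le_exp ht0).symm
    rw [hset]
    have := h (Real.log t) hlogt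
    have heq : 2 * Real.exp (-Real.log t / Δ) = 2 * t ^ p := by
      rw [Real.rpow_def_of_pos ht0, hpdef]
      ring_nf
    rwa [heq] at this
  have hpart2 : (∫⁻ t in Ioi c, μ {ω | t ≤ Real.exp |X ω|})
      ≤ ENNReal.ofReal (c * Δ / (1 - Δ)) := by
    have hint : IntegrableOn (fun t : ℝ => 2 * t ^ p) (Ioi c) :=
      (integrableOn_Ioi_rpow_of_lt hp hc0).const_mul 2
    calc (∫⁻ t in Ioi c, μ {ω | t ≤ Real.exp |X ω|})
        ≤ ∫⁻ t in Ioi c, ENNReal.ofReal (2 * t ^ p) := setLIntegral_mono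
          (by measurability) hub
      _ = ENNReal.ofReal (∫ t in Ioi c, 2 * t ^ p) := by
          rw [← ofReal_integral_eq_lintegral_ofReal hint]
          · exact (ae_restrict_iff' measurableSet_Ioi).2 <| Filter.Eventually.of_forall
              fun t ht => mul_nonneg (by norm_num)
                (Real.rpow_nonneg (le_of_lt (lt_trans hc0 ht)) _)
      _ = ENNReal.ofReal (c * Δ / (1 - Δ)) := by
          congr 1
          rw [MeasureTheory.integral_const_mul, integral_Ioi_rpow_of_lt hp hc0]
          have hΔne : Δ ≠ 0 := ne_of_gt hΔ0
          have hcp : c ^ (p + 1) = c / 2 := by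
            rw [hcdef, ← Real.rpow_mul two_pos.le]
            have he : Δ * (p + 1) = Δ - 1 := by rw [hpdef]; field_simp; linarith
            rw [he, Real.rpow_sub two_pos, Real.rpow_one]
          have hp1 : p + 1 = (Δ - 1) / Δ := by
            rw [hpdef]; field_simp; linarith
          rw [hcp, hp1]
          have hΔ1ne : Δ - 1 ≠ 0 := by linarith
          field_simp
          ring
  -- total bound on the lintegral
  have hbound : ∫⁻ ω, ENNReal.ofReal (Real.exp |X ω|) ∂μ
      ≤ ENNReal.ofReal ((2 : ℝ) ^ Δ / (1 - Δ)) := by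
    rw [hlayer, hsplit]
    calc (∫⁻ t in Ioc (0 : ℝ) c, μ {ω | t ≤ Real.exp |X ω|})
        + ∫⁻ t in Ioi c, μ {ω | t ≤ Real.exp |X ω|}
        ≤ ENNReal.ofReal c + ENNReal.ofReal (c * Δ / (1 - Δ)) := add_le_add hpart1 hpart2
      _ = ENNReal.ofReal (c + c * Δ / (1 - Δ)) := by
          rw [← ENNReal.ofReal_add hc0.le (by positivity)]
      _ = ENNReal.ofReal ((2 : ℝ) ^ Δ / (1 - Δ)) := by
          congr 1
          field_simp
          ring
  have hInt : Integrable (fun ω => Real.exp |X ω|) μ := by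
    refine ⟨hmeas.aestronglyMeasurable, ?_⟩
    rw [hasFiniteIntegral_iff_ofReal (Filter.Eventually.of_forall hnn)]
    exact lt_of_le_of_lt hbound ENNReal.ofReal_lt_top
  refine ⟨hInt, ?_, ?_⟩
  · rw [integral_eq_lintegral_of_nonneg_ae (Filter.Eventually.of_forall hnn)
      hmeas.aestronglyMeasurable]
    exact ENNReal.toReal_le_of_le_ofReal (by positivity) hbound
  · -- log concavity: log (1-Δ) ≥ -2 Δ log 2
    have hconc := strictConcaveOn_log_Ioi.concaveOn
    have hkey := hconc.2 (mem_Ioi.2 (by norm_num : (0:ℝ) < 1/2)) (mem_Ioi.2 one_pos)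
      (by linarith : (0:ℝ) ≤ 2 * Δ) (by linarith : (0:ℝ) ≤ 1 - 2 * Δ) (by ring)
    simp only [smul_eq_mul, Real.log_one, mul_zero, add_zero] at hkey
    have hkey2 : -(2 * Real.log 2) * Δ ≤ Real.log (1 - Δ) := by
      have e1 : 2 * Δ * (1/2 : ℝ) + (1 - 2*Δ) * 1 = 1 - Δ := by ring
      have e2 : Real.log (1/2 : ℝ) = -Real.log 2 := by
        rw [one_div, Real.log_inv]
      rw [e1, e2] at hkey
      nlinarith [hkey]
    have hrw : (2 : ℝ) ^ Δ / (1 - Δ)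
        = Real.exp (Real.log 2 * Δ - Real.log (1 - Δ)) := by
      rw [Real.exp_sub, ← Real.rpow_def_of_pos two_pos, Real.exp_log h1Δ]
    rw [hrw, Real.exp_le_exp]
    nlinarith [Real.log_pos (by norm_num : (1:ℝ) < 2)]
end

section
/- Let X be a real random variable and let Δ > 0 be such that P[|X| ≥ t] ≤ 2·exp(−t/Δ) for all t > 0, and let 0 < ε ≤ 1/2. Then for every y ∈ ℝ: exp(−(1 + log 2)·ε) ≤ E[exp(−(ε/Δ)·|X − y|)] · exp((ε/Δ)·|y|) ≤ exp(3·(log 2)·ε). -/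
open MeasureTheory Real
open Set

lemma exp_int_aux (c : ℝ) {b : ℝ} (hb : 0 < b) :
    ∫ x in Ioi c, Real.exp (-b * x) = Real.exp (-b * c) / b := by
  have := MeasureTheory.integral_comp_mul_left_Ioi (fun x => Real.exp (-x)) c hb
  simp only [smul_eq_mul, neg_mul] at this ⊢
  rw [this, integral_exp_neg_Ioi]
  ring

/-- Two-sided bound on the density ratio `f_{X+Y}(y)/f_Y(y)` for `Y` Laplace with scale `Δ/ε`
and `X` of subexponential diameter at most `Δ`: the ratio equals
`E[exp(-(ε/Δ)|X - y|)] · exp((ε/Δ)|y|)`. -/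
theorem stmt_5 {Ω : Type*} [MeasurableSpace Ω] (μ : Measure Ω) [IsProbabilityMeasure μ]
    (X : Ω → ℝ) (hX : Measurable X) (Δ : ℝ) (hΔ : 0 < Δ)
    (h : ∀ t : ℝ, 0 < t → μ {ω | t ≤ |X ω|} ≤ ENNReal.ofReal (2 * Real.exp (-t / Δ)))
    (ε : ℝ) (hε0 : 0 < ε) (hε : ε ≤ 1 / 2) :
    ∀ y : ℝ,
      Real.exp (-(1 + Real.log 2) * ε) ≤
          (∫ ω, Real.exp (-(ε / Δ) * |X ω - y|) ∂μ) * Real.exp ((ε / Δ) * |y|) ∧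
        (∫ ω, Real.exp (-(ε / Δ) * |X ω - y|) ∂μ) * Real.exp ((ε / Δ) * |y|) ≤
          Real.exp (3 * Real.log 2 * ε) := by
  intro y
  have hΔ' : Δ ≠ 0 := hΔ.ne'
  set a : ℝ := ε / Δ with ha_def
  have ha : 0 < a := div_pos hε0 hΔ
  have hε1 : ε < 1 := by linarith
  have hlog2 : 0 < Real.log 2 := Real.log_pos (by norm_num)
  set L : ℝ := Δ * Real.log 2 with hL_def
  have hL : 0 < L := mul_pos hΔ hlog2
  have hiΔ : 0 < Δ⁻¹ := inv_pos.2 hΔ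
  have hexpL : Real.exp (-Δ⁻¹ * L) = 1 / 2 := by
    have harg : -Δ⁻¹ * L = -Real.log 2 := by rw [hL_def]; field_simp
    rw [harg, Real.exp_neg, Real.exp_log (by norm_num)]
    norm_num
  set m : ℝ → ℝ := fun t => min 1 (2 * Real.exp (-Δ⁻¹ * t)) with hm_def
  have hm_cont : Continuous m := by
    apply continuous_const.min
    exact continuous_const.mul ((continuous_const.mul continuous_id).rexp)
  have hm_nonneg : ∀ t, 0 ≤ m t := fun t => le_min zero_le_one (by positivity)
  have hm_le : ∀ t, m t ≤ 2 * Real.exp (-Δ⁻¹ * t) := fun t => min_le_right _ _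
  have hm_one : ∀ t ∈ Ioc (0:ℝ) L, m t = 1 := by
    intro t ht
    refine min_eq_left ?_
    have h1 : Real.exp (-Δ⁻¹ * L) ≤ Real.exp (-Δ⁻¹ * t) := by
      apply Real.exp_le_exp.2
      nlinarith [ht.2]
    rw [hexpL] at h1
    linarith
  have hm_tail : ∀ t ∈ Ioi L, m t = 2 * Real.exp (-Δ⁻¹ * t) := by
    intro t ht
    refine min_eq_right ?_
    have h1 : Real.exp (-Δ⁻¹ * t) ≤ Real.exp (-Δ⁻¹ * L) := by
      apply Real.exp_le_exp.2
      have := mem_Ioi.1 ht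
      nlinarith
    rw [hexpL] at h1
    linarith
  -- tail bound with m
  have htail : ∀ t ∈ Ioi (0:ℝ), μ {ω | t ≤ |X ω|} ≤ ENNReal.ofReal (m t) := by
    intro t ht
    rcases min_cases 1 (2 * Real.exp (-Δ⁻¹ * t)) with ⟨heq, _⟩ | ⟨heq, _⟩
    · show μ _ ≤ ENNReal.ofReal (min _ _)
      rw [heq, ENNReal.ofReal_one]
      exact prob_le_one
    · show μ _ ≤ ENNReal.ofReal (min _ _)
      rw [heq]
      have harg : -Δ⁻¹ * t = -t / Δ := by field_simp
      rw [harg]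
      exact h t ht
  have habs_nn : 0 ≤ᵐ[μ] fun ω => |X ω| := Filter.Eventually.of_forall fun ω => abs_nonneg _
  -- Step A : E|X| ≤ Δ(1+log 2)
  have hm_int : IntegrableOn m (Ioi 0) := by
    refine Integrable.mono' ((exp_neg_integrableOn_Ioi 0 hiΔ).const_mul 2)
      hm_cont.aestronglyMeasurable (Filter.Eventually.of_forall fun t => ?_)
    rw [norm_of_nonneg (hm_nonneg t)]
    exact hm_le t
  have hsplit : (Ioc (0:ℝ) L) ∪ (Ioi L) = Ioi 0 := Ioc_union_Ioi_eq_Ioi hL.le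
  have hmIoc : ∫ t in Ioc (0:ℝ) L, m t = L := by
    rw [setIntegral_congr_fun measurableSet_Ioc hm_one]
    simp [Real.volume_Ioc, hL.le]
  have hmIoi : ∫ t in Ioi L, m t = Δ := by
    rw [setIntegral_congr_fun measurableSet_Ioi hm_tail, integral_const_mul,
      exp_int_aux L hiΔ, hexpL]
    field_simp
  have hm_val : ∫ t in Ioi (0:ℝ), m t = Δ * (1 + Real.log 2) := by
    rw [← hsplit, setIntegral_union (Ioc_disjoint_Ioi le_rfl) measurableSet_Ioi
      (hm_int.mono_set (by rw [← hsplit]; exact subset_union_left))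
      (hm_int.mono_set (by rw [← hsplit]; exact subset_union_right)),
      hmIoc, hmIoi, hL_def]
    ring
  have hEA : ∫⁻ ω, ENNReal.ofReal |X ω| ∂μ ≤ ENNReal.ofReal (Δ * (1 + Real.log 2)) := by
    rw [lintegral_eq_lintegral_meas_le μ habs_nn hX.abs.aemeasurable]
    calc ∫⁻ t in Ioi 0, μ {ω | t ≤ |X ω|}
        ≤ ∫⁻ t in Ioi 0, ENNReal.ofReal (m t) :=
          setLIntegral_mono hm_cont.measurable.ennreal_ofReal htail
      _ = ENNReal.ofReal (∫ t in Ioi (0:ℝ), m t) :=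
          (ofReal_integral_eq_lintegral_ofReal hm_int
            (Filter.Eventually.of_forall fun t => hm_nonneg t)).symm
      _ = _ := by rw [hm_val]
  have hXabs_int : Integrable (fun ω => |X ω|) μ := by
    refine ⟨hX.abs.aestronglyMeasurable, ?_⟩
    rw [hasFiniteIntegral_iff_ofReal habs_nn]
    exact lt_of_le_of_lt hEA ENNReal.ofReal_lt_top
  have hEabs : ∫ ω, |X ω| ∂μ ≤ Δ * (1 + Real.log 2) := by
    rw [integral_eq_lintegral_of_nonneg_ae habs_nn hX.abs.aestronglyMeasurable]
    have hnn : (0:ℝ) ≤ Δ * (1 + Real.log 2) := by positivity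
    calc (∫⁻ ω, ENNReal.ofReal |X ω| ∂μ).toReal
        ≤ (ENNReal.ofReal (Δ * (1 + Real.log 2))).toReal :=
          ENNReal.toReal_mono ENNReal.ofReal_ne_top hEA
      _ = _ := ENNReal.toReal_ofReal hnn
  -- Step B : E e^{a|X|} ≤ K
  set w : ℝ → ℝ := fun t => a * Real.exp (a * t) with hw_def
  have hw_cont : Continuous w := continuous_const.mul ((continuous_const.mul continuous_id).rexp)
  have hw_nonneg : ∀ t, 0 ≤ w t := fun t => by positivity
  have hG : ∀ x : ℝ, ∫ t in (0:ℝ)..x, w t = Real.exp (a * x) - 1 := by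
    intro x
    rw [hw_def]
    rw [intervalIntegral.integral_const_mul, intervalIntegral.integral_comp_mul_left
      (fun y => Real.exp y) ha.ne', integral_exp]
    rw [smul_eq_mul, mul_zero, Real.exp_zero]
    field_simp
  set b : ℝ := (1 - ε) / Δ with hb_def
  have hb : 0 < b := div_pos (by linarith) hΔ
  have hexp_prod : ∀ t : ℝ, 2 * Real.exp (-Δ⁻¹ * t) * w t = 2 * a * Real.exp (-b * t) := by
    intro t
    rw [hw_def]
    have : -Δ⁻¹ * t + a * t = -b * t := by
      rw [ha_def, hb_def]; field_simp; ring
    rw [show 2 * rexp (-Δ⁻¹ * t) * (a * rexp (a * t)) = 2 * a * (rexp (-Δ⁻¹ * t) * rexp (a * t)) by ring,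
      ← Real.exp_add, this]
  have hwm_int : IntegrableOn (fun t => m t * w t) (Ioi 0) := by
    refine Integrable.mono' ((exp_neg_integrableOn_Ioi 0 hb).const_mul (2 * a))
      (hm_cont.mul hw_cont).aestronglyMeasurable (Filter.Eventually.of_forall fun t => ?_)
    rw [norm_of_nonneg (mul_nonneg (hm_nonneg t) (hw_nonneg t))]
    calc m t * w t ≤ 2 * Real.exp (-Δ⁻¹ * t) * w t :=
          mul_le_mul_of_nonneg_right (hm_le t) (hw_nonneg t)
      _ = 2 * a * Real.exp (-b * t) := hexp_prod t
  set E2 : ℝ := Real.exp (ε * Real.log 2) with hE2_def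
  have hE2_one : 1 ≤ E2 := by
    rw [hE2_def]
    exact Real.one_le_exp (by positivity)
  have haL : a * L = ε * Real.log 2 := by rw [ha_def, hL_def]; field_simp
  have hbL : Real.exp (-b * L) = E2 / 2 := by
    rw [hb_def, hL_def, hE2_def, show -((1-ε)/Δ) * (Δ * Real.log 2) = ε * Real.log 2 + -Real.log 2 by field_simp; ring,
      Real.exp_add, Real.exp_neg, Real.exp_log (by norm_num)]
    ring
  have hwmIoc : ∫ t in Ioc (0:ℝ) L, m t * w t = E2 - 1 := by
    rw [setIntegral_congr_fun measurableSet_Ioc (fun t ht => by rw [hm_one t ht, one_mul]),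
      ← intervalIntegral.integral_of_le hL.le, hG, haL, hE2_def]
  have hwmIoi : ∫ t in Ioi L, m t * w t = 2 * a * (E2 / 2) / b := by
    rw [setIntegral_congr_fun measurableSet_Ioi
        (fun t ht => by rw [hm_tail t ht, hexp_prod t]),
      integral_const_mul, exp_int_aux L hb, hbL]
    ring
  set K : ℝ := E2 / (1 - ε) with hK_def
  have hwm_val : ∫ t in Ioi (0:ℝ), m t * w t = K - 1 := by
    rw [← hsplit, setIntegral_union (Ioc_disjoint_Ioi le_rfl) measurableSet_Ioi
      (hwm_int.mono_set (by rw [← hsplit]; exact subset_union_left))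
      (hwm_int.mono_set (by rw [← hsplit]; exact subset_union_right)),
      hwmIoc, hwmIoi, hK_def, ha_def, hb_def]
    have h1ε : (1:ℝ) - ε ≠ 0 := by linarith
    field_simp
    ring
  have hK1 : 1 ≤ K := by
    rw [hK_def]
    rw [le_div_iff₀ (by linarith : (0:ℝ) < 1 - ε)]
    linarith
  have hlayerB : ∫⁻ ω, ENNReal.ofReal (Real.exp (a * |X ω|) - 1) ∂μ
      = ∫⁻ t in Ioi 0, μ {ω | t ≤ |X ω|} * ENNReal.ofReal (w t) := by
    have key := lintegral_comp_eq_lintegral_meas_le_mul μ habs_nn hX.abs.aemeasurable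
      (fun t _ => hw_cont.intervalIntegrable 0 t)
      (Filter.Eventually.of_forall fun t => hw_nonneg t)
    rw [← key]
    exact lintegral_congr fun ω => by rw [hG]
  have hEB : ∫⁻ ω, ENNReal.ofReal (Real.exp (a * |X ω|)) ∂μ ≤ ENNReal.ofReal K := by
    have heq : (fun ω => ENNReal.ofReal (Real.exp (a * |X ω|)))
        = fun ω => ENNReal.ofReal (Real.exp (a * |X ω|) - 1) + 1 := by
      funext ω
      rw [← ENNReal.ofReal_one, ← ENNReal.ofReal_add
        (sub_nonneg.2 (Real.one_le_exp (by positivity))) zero_le_one]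
      norm_num
    rw [heq, lintegral_add_right _ measurable_const, lintegral_const, measure_univ, mul_one]
    have hstep : ∫⁻ ω, ENNReal.ofReal (Real.exp (a * |X ω|) - 1) ∂μ ≤ ENNReal.ofReal (K - 1) := by
      rw [hlayerB]
      calc ∫⁻ t in Ioi 0, μ {ω | t ≤ |X ω|} * ENNReal.ofReal (w t)
          ≤ ∫⁻ t in Ioi 0, ENNReal.ofReal (m t * w t) := by
            refine setLIntegral_mono ((hm_cont.mul hw_cont).measurable.ennreal_ofReal)
              (fun t ht => ?_)
            rw [ENNReal.ofReal_mul (hm_nonneg t)]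
            exact mul_le_mul_left (htail t ht) _
        _ = ENNReal.ofReal (∫ t in Ioi (0:ℝ), m t * w t) :=
            (ofReal_integral_eq_lintegral_ofReal hwm_int
              (Filter.Eventually.of_forall fun t =>
                mul_nonneg (hm_nonneg t) (hw_nonneg t))).symm
        _ = ENNReal.ofReal (K - 1) := by rw [hwm_val]
    calc ∫⁻ ω, ENNReal.ofReal (Real.exp (a * |X ω|) - 1) ∂μ + 1
        ≤ ENNReal.ofReal (K - 1) + 1 := add_le_add_left hstep 1
      _ = ENNReal.ofReal K := by
          rw [← ENNReal.ofReal_one, ← ENNReal.ofReal_add (by linarith) zero_le_one]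
          norm_num
  have hexpa_nn : 0 ≤ᵐ[μ] fun ω => Real.exp (a * |X ω|) :=
    Filter.Eventually.of_forall fun ω => (Real.exp_pos _).le
  have hexpa_meas : Measurable fun ω => Real.exp (a * |X ω|) := (hX.abs.const_mul a).exp
  have hexpa_int : Integrable (fun ω => Real.exp (a * |X ω|)) μ := by
    refine ⟨hexpa_meas.aestronglyMeasurable, ?_⟩
    rw [hasFiniteIntegral_iff_ofReal hexpa_nn]
    exact lt_of_le_of_lt hEB ENNReal.ofReal_lt_top
  have hEexpa : ∫ ω, Real.exp (a * |X ω|) ∂μ ≤ K := by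
    rw [integral_eq_lintegral_of_nonneg_ae hexpa_nn hexpa_meas.aestronglyMeasurable]
    calc (∫⁻ ω, ENNReal.ofReal (Real.exp (a * |X ω|)) ∂μ).toReal
        ≤ (ENNReal.ofReal K).toReal := ENNReal.toReal_mono ENNReal.ofReal_ne_top hEB
      _ = K := ENNReal.toReal_ofReal (by linarith)
  -- Jensen lower bound
  have hnegint : Integrable (fun ω => Real.exp (-a * |X ω|)) μ := by
    refine Integrable.mono' (integrable_const 1)
      ((hX.abs.const_mul (-a)).exp.aestronglyMeasurable)
      (Filter.Eventually.of_forall fun ω => ?_)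
    rw [norm_of_nonneg (Real.exp_pos _).le]
    exact Real.exp_le_one_iff.2 (mul_nonpos_of_nonpos_of_nonneg (neg_nonpos.2 ha.le) (abs_nonneg _))
  have hjensen : Real.exp (-(1 + Real.log 2) * ε) ≤ ∫ ω, Real.exp (-a * |X ω|) ∂μ := by
    have hint_f : Integrable (fun ω => -a * |X ω|) μ := hXabs_int.const_mul (-a)
    have hmap := convexOn_exp.map_integral_le (μ := μ) continuous_exp.continuousOn
      isClosed_univ (Filter.Eventually.of_forall fun ω => mem_univ _) hint_f
      (by exact hnegint)
    refine le_trans ?_ hmap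
    apply Real.exp_le_exp.2
    rw [integral_const_mul]
    have haΔ : a * Δ = ε := div_mul_cancel₀ ε hΔ'
    have h1 : a * (∫ ω, |X ω| ∂μ) ≤ a * (Δ * (1 + Real.log 2)) :=
      mul_le_mul_of_nonneg_left hEabs ha.le
    nlinarith
  -- integrability of the main integrand
  have hI_int : Integrable (fun ω => Real.exp (-a * |X ω - y|)) μ := by
    refine Integrable.mono' (integrable_const 1)
      (((hX.sub measurable_const).abs.const_mul (-a)).exp.aestronglyMeasurable)
      (Filter.Eventually.of_forall fun ω => ?_)
    rw [norm_of_nonneg (Real.exp_pos _).le]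
    exact Real.exp_le_one_iff.2 (mul_nonpos_of_nonpos_of_nonneg (neg_nonpos.2 ha.le) (abs_nonneg _))
  have htri : ∀ ω, |X ω - y| ≤ |X ω| + |y| := by
    intro ω
    calc |X ω - y| = |X ω + -y| := by rw [sub_eq_add_neg]
      _ ≤ |X ω| + |-y| := abs_add_le _ _
      _ = |X ω| + |y| := by rw [abs_neg]
  have htri2 : ∀ ω, |y| - |X ω| ≤ |X ω - y| := by
    intro ω
    calc |y| - |X ω| ≤ |y - X ω| := abs_sub_abs_le_abs_sub y (X ω)
      _ = |X ω - y| := abs_sub_comm y (X ω)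
  constructor
  · -- lower bound
    have hpt : ∀ ω, Real.exp (-a * |X ω|) * Real.exp (-a * |y|) ≤ Real.exp (-a * |X ω - y|) := by
      intro ω
      rw [← Real.exp_add]
      apply Real.exp_le_exp.2
      have hmul := mul_le_mul_of_nonneg_left (htri ω) ha.le
      linarith
    have hmono := integral_mono (hnegint.mul_const (Real.exp (-a * |y|))) hI_int hpt
    rw [integral_mul_const] at hmono
    have h1 : Real.exp (-(1 + Real.log 2) * ε) * Real.exp (-a * |y|)
        ≤ (∫ ω, Real.exp (-a * |X ω - y|) ∂μ) :=
      le_trans (mul_le_mul_of_nonneg_right hjensen (Real.exp_pos _).le) hmono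
    have := mul_le_mul_of_nonneg_right h1 (Real.exp_pos (a * |y|)).le
    rwa [mul_assoc, ← Real.exp_add, show -a * |y| + a * |y| = 0 by ring,
      Real.exp_zero, mul_one] at this
  · -- upper bound
    have hpt : ∀ ω, Real.exp (-a * |X ω - y|) ≤ Real.exp (a * |X ω|) * Real.exp (-a * |y|) := by
      intro ω
      rw [← Real.exp_add]
      apply Real.exp_le_exp.2
      have hmul := mul_le_mul_of_nonneg_left (htri2 ω) ha.le
      linarith
    have hmono := integral_mono hI_int (hexpa_int.mul_const (Real.exp (-a * |y|))) hpt
    rw [integral_mul_const] at hmono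
    have h1 : (∫ ω, Real.exp (-a * |X ω - y|) ∂μ) ≤ K * Real.exp (-a * |y|) :=
      le_trans hmono (mul_le_mul_of_nonneg_right hEexpa (Real.exp_pos _).le)
    have h2 := mul_le_mul_of_nonneg_right h1 (Real.exp_pos (a * |y|)).le
    rw [mul_assoc, ← Real.exp_add, show -a * |y| + a * |y| = 0 by ring,
      Real.exp_zero, mul_one] at h2
    refine le_trans h2 ?_
    -- K ≤ exp(3 log 2 ε)
    have hconvineq : Real.exp (-(2 * Real.log 2) * ε) ≤ 1 - ε := by
      have h2c := convexOn_exp.2 (mem_univ (0:ℝ)) (mem_univ (-Real.log 2))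
        (by linarith : (0:ℝ) ≤ 1 - 2 * ε) (by linarith : (0:ℝ) ≤ 2 * ε) (by ring)
      simp only [smul_eq_mul] at h2c
      calc Real.exp (-(2 * Real.log 2) * ε)
          = Real.exp ((1 - 2 * ε) * 0 + 2 * ε * (-Real.log 2)) := by ring_nf
        _ ≤ (1 - 2 * ε) * Real.exp 0 + 2 * ε * Real.exp (-Real.log 2) := h2c
        _ = 1 - ε := by
            rw [Real.exp_zero, Real.exp_neg, Real.exp_log (by norm_num : (0:ℝ) < 2)]
            ring
    rw [hK_def, div_le_iff₀ (by linarith : (0:ℝ) < 1 - ε)]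
    calc E2 = Real.exp (3 * Real.log 2 * ε) * Real.exp (-(2 * Real.log 2) * ε) := by
          rw [hE2_def, ← Real.exp_add]; ring_nf
      _ ≤ Real.exp (3 * Real.log 2 * ε) * (1 - ε) :=
          mul_le_mul_of_nonneg_left hconvineq (Real.exp_pos _).le
end

section
/- Let X = (X₁, …, X_k) be a random vector in ℝ^k (with k ≥ 1, coordinates not necessarily independent), let Δ > 0 be such that P[|X_i| ≥ t] ≤ 2·exp(−t/Δ) for all t > 0 and all i, and let 0 < ε ≤ 1/6. Then for every y ∈ ℝ^k: exp(−3·(1 + log 2)·ε) ≤ E[exp(−(ε/(kΔ))·Σ_{j=1}^{k} |X_j − y_j|)] · exp((ε/(kΔ))·Σ_{j=1}^{k} |y_j|) ≤ exp(9·(log 2)·ε). -/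
open MeasureTheory Real Set

lemma aux_integral_exp_neg_mul {b : ℝ} (hb : 0 < b) :
    ∫ x in Set.Ioi (0:ℝ), Real.exp (-b * x) = 1 / b := by
  have key : ∫ x in Set.Ioi (0:ℝ), Real.exp (-b * x) = 0 - (-Real.exp (-b * 0) / b) := by
    refine MeasureTheory.integral_Ioi_of_hasDerivAt_of_tendsto
      (f := fun x => -Real.exp (-b * x) / b) (f' := fun x => Real.exp (-b * x)) ?_ ?_
      (exp_neg_integrableOn_Ioi 0 hb) ?_
    · exact (((Real.continuous_exp.comp (continuous_const.mul continuous_id)).neg.div_const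
        b).continuousWithinAt)
    · intro x _
      have h1 : HasDerivAt (fun x : ℝ => -b * x) (-b) x := by
        simpa using (hasDerivAt_id x).const_mul (-b)
      have h2 := ((Real.hasDerivAt_exp (-b * x)).comp x h1).neg.div_const b
      convert h2 using 1
      · rfl
      · rfl
      · field_simp
    · have : Filter.Tendsto (fun x => -Real.exp (-b * x) / b) Filter.atTop (nhds (-0 / b)) := by
        refine Filter.Tendsto.div_const (Filter.Tendsto.neg ?_) _
        exact Real.tendsto_exp_atBot.comp (Filter.tendsto_id.const_mul_atTop_of_neg (by linarith))
      simpa using this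
  rw [key]
  field_simp
  simp

lemma aux_moment {Ω : Type*} [MeasurableSpace Ω] (μ : Measure Ω) [IsProbabilityMeasure μ]
    {W : Ω → ℝ} (hW : Measurable W) {Δ : ℝ} (hΔ : 0 < Δ)
    (h : ∀ t : ℝ, 0 < t → μ {ω | t ≤ |W ω|} ≤ ENNReal.ofReal (2 * Real.exp (-t / Δ))) :
    ∫⁻ ω, ENNReal.ofReal |W ω| ∂μ ≤ ENNReal.ofReal (2 * Δ) := by
  have layer := MeasureTheory.lintegral_comp_eq_lintegral_meas_le_mul μ
    (f := fun ω => |W ω|) (g := fun _ => (1:ℝ))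
    (Filter.Eventually.of_forall fun ω => abs_nonneg _)
    hW.abs.aemeasurable
    (fun t _ => intervalIntegrable_const)
    (Filter.Eventually.of_forall fun _ => zero_le_one)
  simp only [intervalIntegral.integral_const, smul_eq_mul, mul_one, sub_zero,
    ENNReal.ofReal_one] at layer
  rw [layer]
  have hI : ∫ t in Set.Ioi (0:ℝ), 2 * Real.exp (-t / Δ) = 2 * Δ := by
    have h1 : (fun t : ℝ => 2 * Real.exp (-t / Δ)) = fun t => 2 * Real.exp (-Δ⁻¹ * t) := by
      funext t; congr 2; field_simp
    rw [h1, MeasureTheory.integral_const_mul, aux_integral_exp_neg_mul (by positivity)]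
    field_simp
  calc ∫⁻ t in Set.Ioi (0:ℝ), μ {a | t ≤ |W a|}
      ≤ ∫⁻ t in Set.Ioi (0:ℝ), ENNReal.ofReal (2 * Real.exp (-t / Δ)) :=
        MeasureTheory.setLIntegral_mono
          ((Continuous.measurable (by fun_prop)).ennreal_ofReal) fun t ht => h t ht
    _ = ENNReal.ofReal (∫ t in Set.Ioi (0:ℝ), 2 * Real.exp (-t / Δ)) := by
        rw [MeasureTheory.ofReal_integral_eq_lintegral_ofReal]
        · have h1 : (fun t : ℝ => 2 * Real.exp (-t / Δ)) = fun t => 2 * Real.exp (-Δ⁻¹ * t) := by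
            funext t; congr 2; field_simp
          rw [h1]
          exact (exp_neg_integrableOn_Ioi 0 (by positivity)).const_mul 2
        · exact Filter.Eventually.of_forall fun t => by positivity
    _ = ENNReal.ofReal (2 * Δ) := by rw [hI]

lemma aux_mgf {Ω : Type*} [MeasurableSpace Ω] (μ : Measure Ω) [IsProbabilityMeasure μ]
    {W : Ω → ℝ} (hW : Measurable W) {Δ : ℝ} (hΔ : 0 < Δ)
    (h : ∀ t : ℝ, 0 < t → μ {ω | t ≤ |W ω|} ≤ ENNReal.ofReal (2 * Real.exp (-t / Δ)))
    {s : ℝ} (hs : 0 < s) (hsΔ : s * Δ < 1) :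
    ∫⁻ ω, ENNReal.ofReal (Real.exp (s * |W ω|)) ∂μ
      ≤ ENNReal.ofReal (1 + 2 * s * Δ / (1 - s * Δ)) := by
  have hb : 0 < Δ⁻¹ - s := by
    rw [sub_pos, ← one_div, lt_div_iff₀ hΔ]; exact hsΔ
  have hgc : Continuous fun t : ℝ => s * Real.exp (s * t) := by fun_prop
  have hanti : ∀ x : ℝ, ∫ t in (0:ℝ)..x, s * Real.exp (s * t) = Real.exp (s * x) - 1 := by
    intro x
    have hd : ∀ t ∈ Set.uIcc (0:ℝ) x,
        HasDerivAt (fun u => Real.exp (s * u)) (s * Real.exp (s * t)) t := by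
      intro t _
      have h1 : HasDerivAt (fun u : ℝ => s * u) s t := by simpa using (hasDerivAt_id t).const_mul s
      have h2 := (Real.hasDerivAt_exp (s * t)).comp t h1
      simpa [mul_comm, Function.comp_def] using h2
    rw [intervalIntegral.integral_eq_sub_of_hasDerivAt hd (hgc.intervalIntegrable 0 x)]
    simp [Real.exp_zero]
  have layer := MeasureTheory.lintegral_comp_eq_lintegral_meas_le_mul μ
    (f := fun ω => |W ω|) (g := fun t => s * Real.exp (s * t))
    (Filter.Eventually.of_forall fun ω => abs_nonneg _) hW.abs.aemeasurable
    (fun t _ => hgc.intervalIntegrable 0 t)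
    (Filter.Eventually.of_forall fun t => by positivity)
  simp only [hanti] at layer
  have hsplit : ∫⁻ ω, ENNReal.ofReal (Real.exp (s * |W ω|)) ∂μ
      = (∫⁻ ω, ENNReal.ofReal (Real.exp (s * |W ω|) - 1) ∂μ) + 1 := by
    have hfun : (fun ω => ENNReal.ofReal (Real.exp (s * |W ω|)))
        = fun ω => ENNReal.ofReal (Real.exp (s * |W ω|) - 1) + 1 := by
      funext ω
      have h1 : (1:ℝ) ≤ Real.exp (s * |W ω|) := Real.one_le_exp (by positivity)
      rw [← ENNReal.ofReal_one, ← ENNReal.ofReal_add (by linarith) zero_le_one]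
      norm_num
    rw [hfun, MeasureTheory.lintegral_add_right _ measurable_const, MeasureTheory.lintegral_one,
      measure_univ]
  rw [hsplit, layer]
  have htail : ∫⁻ t in Set.Ioi (0:ℝ), μ {a | t ≤ |W a|} * ENNReal.ofReal (s * Real.exp (s * t))
      ≤ ENNReal.ofReal (2 * s * (1 / (Δ⁻¹ - s))) := by
    calc ∫⁻ t in Set.Ioi (0:ℝ), μ {a | t ≤ |W a|} * ENNReal.ofReal (s * Real.exp (s * t))
        ≤ ∫⁻ t in Set.Ioi (0:ℝ),
            ENNReal.ofReal ((2 * s) * Real.exp (-(Δ⁻¹ - s) * t)) := by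
          refine MeasureTheory.setLIntegral_mono
            ((Continuous.measurable (by fun_prop)).ennreal_ofReal) fun t ht => ?_
          have heq : (2 * s) * Real.exp (-(Δ⁻¹ - s) * t)
              = (2 * Real.exp (-t / Δ)) * (s * Real.exp (s * t)) := by
            rw [show -(Δ⁻¹ - s) * t = -t / Δ + s * t by field_simp; ring, Real.exp_add]
            ring
          refine le_trans (mul_le_mul_left (h t ht) _) ?_
          rw [← ENNReal.ofReal_mul (by positivity), ← heq]
      _ = ENNReal.ofReal (∫ t in Set.Ioi (0:ℝ), (2 * s) * Real.exp (-(Δ⁻¹ - s) * t)) := by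
          rw [MeasureTheory.ofReal_integral_eq_lintegral_ofReal
            ((exp_neg_integrableOn_Ioi 0 hb).const_mul _)
            (Filter.Eventually.of_forall fun t => by positivity)]
      _ = ENNReal.ofReal (2 * s * (1 / (Δ⁻¹ - s))) := by
          rw [MeasureTheory.integral_const_mul, aux_integral_exp_neg_mul hb]
  calc (∫⁻ t in Set.Ioi (0:ℝ), μ {a | t ≤ |W a|} * ENNReal.ofReal (s * Real.exp (s * t))) + 1
      ≤ ENNReal.ofReal (2 * s * (1 / (Δ⁻¹ - s))) + 1 := add_le_add_left htail 1
    _ = ENNReal.ofReal (1 + 2 * s * Δ / (1 - s * Δ)) := by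
        rw [← ENNReal.ofReal_one, ← ENNReal.ofReal_add (by positivity) zero_le_one]
        have h1 : Δ⁻¹ - s = (1 - s * Δ) / Δ := by field_simp
        have h2 : 2 * s * (1 / ((1 - s * Δ) / Δ)) = 2 * s * Δ / (1 - s * Δ) := by
          rw [one_div_div]; ring
        rw [h1, h2, add_comm]

set_option maxHeartbeats 2000000 in
/-- Multivariate version: two-sided bound on the density ratio `f_{X+Y}(y)/f_Y(y)` where
`Y` has i.i.d. Laplace coordinates with scale `kΔ/ε` and the coordinates of `X` have
subexponential diameter at most `Δ`. -/
theorem stmt_6 {Ω : Type*} [MeasurableSpace Ω] (μ : Measure Ω) [IsProbabilityMeasure μ]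
    {k : ℕ} (hk : 1 ≤ k) (X : Fin k → Ω → ℝ) (hX : ∀ i, Measurable (X i))
    (Δ : ℝ) (hΔ : 0 < Δ)
    (h : ∀ i, ∀ t : ℝ, 0 < t →
      μ {ω | t ≤ |X i ω|} ≤ ENNReal.ofReal (2 * Real.exp (-t / Δ)))
    (ε : ℝ) (hε0 : 0 < ε) (hε : ε ≤ 1 / 6) :
    ∀ y : Fin k → ℝ,
      Real.exp (-3 * (1 + Real.log 2) * ε) ≤
          (∫ ω, Real.exp (-(ε / (k * Δ)) * ∑ j, |X j ω - y j|) ∂μ) *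
            Real.exp ((ε / (k * Δ)) * ∑ j, |y j|) ∧
        (∫ ω, Real.exp (-(ε / (k * Δ)) * ∑ j, |X j ω - y j|) ∂μ) *
            Real.exp ((ε / (k * Δ)) * ∑ j, |y j|) ≤
          Real.exp (9 * Real.log 2 * ε) := by
  intro y
  have hk0 : (0:ℝ) < k := by exact_mod_cast hk
  have hkne : (k:ℝ) ≠ 0 := hk0.ne'
  have hε1 : ε < 1 := lt_of_le_of_lt hε (by norm_num)
  set c : ℝ := ε / (k * Δ) with hc_def
  have hc : 0 < c := by positivity
  set s : ℝ := ε / Δ with hs_def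
  have hs : 0 < s := by positivity
  have hsc : s = k * c := by rw [hs_def, hc_def]; field_simp
  have hsΔ : s * Δ = ε := by rw [hs_def]; field_simp
  have hsΔ1 : s * Δ < 1 := by rw [hsΔ]; exact hε1
  -- notation
  set Z : Ω → ℝ := fun ω => ∑ j, |X j ω - y j| with hZ_def
  set Y : ℝ := ∑ j, |y j| with hY_def
  set S : Ω → ℝ := fun ω => ∑ j, |X j ω| with hS_def
  have hZm : Measurable Z := Finset.measurable_sum _ fun j _ => ((hX j).sub measurable_const).abs
  have hSm : Measurable S := Finset.measurable_sum _ fun j _ => (hX j).abs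
  have hZ0 : ∀ ω, 0 ≤ Z ω := fun ω => Finset.sum_nonneg fun j _ => abs_nonneg _
  have hS0 : ∀ ω, 0 ≤ S ω := fun ω => Finset.sum_nonneg fun j _ => abs_nonneg _
  set f : Ω → ℝ := fun ω => Real.exp (-c * Z ω + c * Y) with hf_def
  have hfm : Measurable f := ((hZm.const_mul (-c)).add measurable_const).exp
  have hf0 : ∀ ω, 0 ≤ f ω := fun ω => (Real.exp_pos _).le
  have hfub : ∀ ω, f ω ≤ Real.exp (c * Y) := by
    intro ω
    apply Real.exp_le_exp.mpr
    nlinarith [hZ0 ω, hc.le, mul_nonneg hc.le (hZ0 ω)]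
  have hInt : Integrable f μ := by
    refine (integrable_const (Real.exp (c * Y))).mono' hfm.aestronglyMeasurable ?_
    filter_upwards with ω
    rw [Real.norm_eq_abs, abs_of_nonneg (hf0 ω)]
    exact hfub ω
  have hgoal : (∫ ω, Real.exp (-c * ∑ j, |X j ω - y j|) ∂μ) * Real.exp (c * Y)
      = ∫ ω, f ω ∂μ := by
    rw [← MeasureTheory.integral_mul_const]
    refine integral_congr_ae (Filter.Eventually.of_forall fun ω => ?_)
    simp only [hf_def, hZ_def]
    exact (Real.exp_add _ _).symm
  -- pointwise comparisons
  have hfle : ∀ ω, f ω ≤ Real.exp (c * S ω) := by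
    intro ω
    apply Real.exp_le_exp.mpr
    have h1 : Y - Z ω ≤ S ω := by
      rw [hY_def, hZ_def, hS_def, ← Finset.sum_sub_distrib]
      refine Finset.sum_le_sum fun j _ => ?_
      have h2 : |y j| ≤ |X j ω - y j| + |X j ω| := by
        calc |y j| = |(y j - X j ω) + X j ω| := by congr 1; ring
          _ ≤ |y j - X j ω| + |X j ω| := abs_add_le _ _
          _ = |X j ω - y j| + |X j ω| := by rw [abs_sub_comm]
      linarith
    nlinarith [mul_le_mul_of_nonneg_left h1 hc.le]
  have hfge : ∀ ω, Real.exp (-c * S ω) ≤ f ω := by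
    intro ω
    apply Real.exp_le_exp.mpr
    have h1 : Z ω ≤ Y + S ω := by
      rw [hY_def, hZ_def, hS_def, ← Finset.sum_add_distrib]
      refine Finset.sum_le_sum fun j _ => ?_
      calc |X j ω - y j| = |X j ω - y j| := rfl
        _ ≤ |X j ω| + |y j| := abs_sub _ _
        _ = |y j| + |X j ω| := by ring
    nlinarith [mul_le_mul_of_nonneg_left h1 hc.le]
  clear_value c s Z Y S f
  constructor
  · -- lower bound
    rw [hgoal]
    have hXint : ∀ j, Integrable (fun ω => |X j ω|) μ := by
      intro j
      refine ⟨(hX j).abs.aestronglyMeasurable, ?_⟩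
      rw [hasFiniteIntegral_iff_ofReal (Filter.Eventually.of_forall fun ω => abs_nonneg _)]
      exact lt_of_le_of_lt (aux_moment μ (hX j) hΔ (h j)) ENNReal.ofReal_lt_top
    have hXmean : ∀ j, ∫ ω, |X j ω| ∂μ ≤ 2 * Δ := by
      intro j
      rw [integral_eq_lintegral_of_nonneg_ae (Filter.Eventually.of_forall fun ω => abs_nonneg _)
        (hX j).abs.aestronglyMeasurable]
      calc (∫⁻ ω, ENNReal.ofReal |X j ω| ∂μ).toReal
          ≤ (ENNReal.ofReal (2 * Δ)).toReal :=
            ENNReal.toReal_mono ENNReal.ofReal_ne_top (aux_moment μ (hX j) hΔ (h j))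
        _ = 2 * Δ := ENNReal.toReal_ofReal (by positivity)
    have hSint : Integrable S μ := by
      rw [hS_def]
      exact integrable_finset_sum _ fun j _ => hXint j
    have hSmean : ∫ ω, S ω ∂μ ≤ k * (2 * Δ) := by
      rw [hS_def, MeasureTheory.integral_finset_sum _ fun j _ => hXint j]
      calc ∑ j : Fin k, ∫ ω, |X j ω| ∂μ ≤ ∑ _j : Fin k, 2 * Δ :=
            Finset.sum_le_sum fun j _ => hXmean j
        _ = k * (2 * Δ) := by simp [Finset.sum_const, nsmul_eq_mul]
    have hExpS : Integrable (fun ω => Real.exp (-c * S ω)) μ := by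
      refine (integrable_const (1:ℝ)).mono' ((hSm.const_mul (-c)).exp).aestronglyMeasurable ?_
      filter_upwards with ω
      rw [Real.norm_eq_abs, abs_of_nonneg (Real.exp_pos _).le]
      exact Real.exp_le_one_iff.mpr (by nlinarith [hS0 ω, hc.le, mul_nonneg hc.le (hS0 ω)])
    have hLin : Integrable (fun ω => -c * S ω + 1) μ :=
      (hSint.const_mul (-c)).add (integrable_const 1)
    have step1 : ∫ ω, (-c * S ω + 1) ∂μ ≤ ∫ ω, Real.exp (-c * S ω) ∂μ :=
      integral_mono hLin hExpS fun ω => Real.add_one_le_exp _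
    have step2 : ∫ ω, Real.exp (-c * S ω) ∂μ ≤ ∫ ω, f ω ∂μ :=
      integral_mono hExpS hInt hfge
    have step3 : (1:ℝ) - 2 * ε ≤ ∫ ω, (-c * S ω + 1) ∂μ := by
      rw [MeasureTheory.integral_add (hSint.const_mul (-c)) (integrable_const 1),
        MeasureTheory.integral_const_mul, MeasureTheory.integral_const, probReal_univ]
      simp only [ENNReal.toReal_one, smul_eq_mul, one_mul]
      have hck : c * (k * (2 * Δ)) = 2 * ε := by
        rw [hc_def]; field_simp
      nlinarith [mul_le_mul_of_nonneg_left hSmean hc.le]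
    have step4 : Real.exp (-3 * (1 + Real.log 2) * ε) ≤ 1 - 2 * ε := by
      have hL := Real.log_two_gt_d9
      set a : ℝ := 3 * (1 + Real.log 2) with ha_def
      have ha4 : 4 ≤ a := by rw [ha_def]; nlinarith
      have hpos : (0:ℝ) < 1 + a * ε := by nlinarith
      have h1 : Real.exp (-3 * (1 + Real.log 2) * ε) ≤ (1 + a * ε)⁻¹ := by
        rw [show -3 * (1 + Real.log 2) * ε = -(a * ε) by rw [ha_def]; ring, Real.exp_neg]
        refine inv_anti₀ hpos ?_
        have := Real.add_one_le_exp (a * ε)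
        linarith
      have h2 : (1 + a * ε)⁻¹ ≤ 1 - 2 * ε := by
        rw [inv_le_iff_one_le_mul₀ hpos]
        nlinarith [mul_nonneg hε0.le (sub_nonneg.2 ha4), mul_nonneg hε0.le hε0.le]
      linarith
    linarith
  · -- upper bound
    rw [hgoal]
    have hB0 : (0:ℝ) < 1 - ε := by linarith
    set B : ℝ := 1 + 2 * ε / (1 - ε) with hB_def
    have key : ∫⁻ ω, ENNReal.ofReal (f ω) ∂μ ≤ ENNReal.ofReal B := by
      calc ∫⁻ ω, ENNReal.ofReal (f ω) ∂μ
          ≤ ∫⁻ ω, ∏ j : Fin k, (ENNReal.ofReal (Real.exp (s * |X j ω|))) ^ ((1:ℝ)/k) ∂μ := by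
            refine lintegral_mono fun ω => ?_
            have h1 : ENNReal.ofReal (f ω) ≤ ENNReal.ofReal (Real.exp (c * S ω)) :=
              ENNReal.ofReal_le_ofReal (hfle ω)
            refine h1.trans_eq ?_
            have hfac : ∀ j : Fin k, (ENNReal.ofReal (Real.exp (s * |X j ω|))) ^ ((1:ℝ)/k)
                = ENNReal.ofReal (Real.exp (c * |X j ω|)) := by
              intro j
              rw [ENNReal.ofReal_rpow_of_pos (Real.exp_pos _), ← Real.exp_mul]
              congr 2
              rw [hsc]; field_simp
            calc ENNReal.ofReal (Real.exp (c * S ω))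
                = ∏ j : Fin k, ENNReal.ofReal (Real.exp (c * |X j ω|)) := by
                  rw [hS_def]
                  simp only [Finset.mul_sum]
                  rw [Real.exp_sum, ENNReal.ofReal_prod_of_nonneg
                    (fun j _ => (Real.exp_pos _).le)]
              _ = ∏ j : Fin k, (ENNReal.ofReal (Real.exp (s * |X j ω|))) ^ ((1:ℝ)/k) :=
                  Finset.prod_congr rfl fun j _ => (hfac j).symm
        _ ≤ ∏ j : Fin k, (∫⁻ ω, ENNReal.ofReal (Real.exp (s * |X j ω|)) ∂μ) ^ ((1:ℝ)/k) := by
            refine ENNReal.lintegral_prod_norm_pow_le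
              (f := fun (j : Fin k) ω => ENNReal.ofReal (Real.exp (s * |X j ω|)))
              (p := fun _ => (1:ℝ)/k) Finset.univ
              (fun j _ => (((hX j).abs.const_mul s).exp.ennreal_ofReal).aemeasurable) ?_
              (fun j _ => by positivity)
            rw [Finset.sum_const, Finset.card_univ, Fintype.card_fin, nsmul_eq_mul]
            field_simp
        _ ≤ ∏ j : Fin k, (ENNReal.ofReal B) ^ ((1:ℝ)/k) := by
            refine Finset.prod_le_prod' fun j _ => ?_
            refine ENNReal.rpow_le_rpow ?_ (by positivity)
            have := aux_mgf μ (hX j) hΔ (h j) hs hsΔ1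
            have hBeq : 1 + 2 * s * Δ / (1 - s * Δ) = B := by
              rw [hB_def, mul_assoc, hsΔ]
            rwa [hBeq] at this
        _ = ENNReal.ofReal B := by
            rw [Finset.prod_const, Finset.card_univ, Fintype.card_fin,
              ← ENNReal.rpow_natCast _ k, ← ENNReal.rpow_mul]
            rw [show (1:ℝ)/k * k = 1 by field_simp, ENNReal.rpow_one]
    have hintle : ∫ ω, f ω ∂μ ≤ B := by
      rw [integral_eq_lintegral_of_nonneg_ae (Filter.Eventually.of_forall hf0)
        hfm.aestronglyMeasurable]
      calc (∫⁻ ω, ENNReal.ofReal (f ω) ∂μ).toReal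
          ≤ (ENNReal.ofReal B).toReal := ENNReal.toReal_mono ENNReal.ofReal_ne_top key
        _ = B := ENNReal.toReal_ofReal (by positivity)
    have hBle : B ≤ Real.exp (9 * Real.log 2 * ε) := by
      have hL := Real.log_two_gt_d9
      have h2 : 2 * ε / (1 - ε) ≤ 9 * Real.log 2 * ε := by
        rw [div_le_iff₀ hB0]
        nlinarith [Real.log_two_lt_d9, mul_lt_mul_of_pos_right hL hε0,
          mul_le_mul_of_nonneg_right hε hε0.le, mul_nonneg hε0.le hε0.le,
          mul_lt_mul_of_pos_right (mul_lt_mul_of_pos_right hL hε0) hε0]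
      calc B = 2 * ε / (1 - ε) + 1 := by rw [hB_def]; ring
        _ ≤ Real.exp (2 * ε / (1 - ε)) := Real.add_one_le_exp _
        _ ≤ Real.exp (9 * Real.log 2 * ε) := Real.exp_le_exp.mpr h2
    linarith
end

section
/- Let Δ₁ ≥ 0 and Δ₂ > 0, let c = 1 + 4·log 2, and let 0 < ε ≤ c/2. Let μ₁ and μ₂ be Borel probability measures on ℝ, and let g₁, g₂ ∈ ℝ satisfy |g₁ − g₂| ≤ Δ₁ and, for i ∈ {1,2} and all t > 0, μ_i({x : |x − g_i| ≥ t}) ≤ 2·exp(−t/Δ₂). Let λ be the Laplace distribution with scale c·(Δ₁ + Δ₂)/ε. Then for every Borel set T ⊆ ℝ, (μ₁ ∗ λ)(T) ≤ exp(ε)·(μ₂ ∗ λ)(T), where ∗ denotes convolution of measures. -/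
set_option maxHeartbeats 1000000

open MeasureTheory Real
open Set

lemma taylor_aux {x : ℝ} (h0 : 0 ≤ x) (h2 : x ≤ 1/2) :
    1 + x ≤ Real.exp (9/4 * x) * (1 - x) := by
  have hs := Real.sum_le_exp_of_nonneg (x := 9/4*x) (by linarith) 5
  have hsum : ∑ i ∈ Finset.range 5, (9/4*x)^i / (Nat.factorial i) =
      1 + 9/4*x + (9/4*x)^2/2 + (9/4*x)^3/6 + (9/4*x)^4/24 := by
    simp [Finset.sum_range_succ, Nat.factorial]
    try ring
  rw [hsum] at hs
  nlinarith [sq_nonneg x, sq_nonneg (x*x), mul_nonneg h0 h0, mul_nonneg (mul_nonneg h0 h0) h0,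
    mul_nonneg (mul_nonneg (mul_nonneg h0 h0) h0) h0, sq_nonneg (1/2 - x)]

lemma key_ineq {L d x ε : ℝ} (hx0 : 0 < x) (hx : x ≤ 1/2)
    (h : d + 2*L*x + 9/4*x ≤ ε) :
    Real.exp (L*x) * (1/(1-x)) * Real.exp d ≤
      Real.exp ε * (Real.exp (-(L*x)) * (1/(1+x))) := by
  have h1x : (0:ℝ) < 1 - x := by linarith
  have h1x' : (0:ℝ) < 1 + x := by linarith
  rw [mul_one_div, mul_one_div, div_mul_eq_mul_div, mul_div_assoc', div_le_div_iff₀ h1x h1x']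
  have h1 := taylor_aux hx0.le hx
  calc Real.exp (L*x) * Real.exp d * (1+x)
      = Real.exp (d + L*x) * (1+x) := by rw [← Real.exp_add]; ring_nf
    _ ≤ Real.exp (d + L*x) * (Real.exp (9/4*x) * (1 - x)) := by
        have := Real.exp_pos (d + L*x)
        nlinarith
    _ = Real.exp (d + L*x + 9/4*x) * (1 - x) := by rw [← mul_assoc, ← Real.exp_add]
    _ ≤ Real.exp (ε - L*x) * (1 - x) := by
        have : Real.exp (d + L*x + 9/4*x) ≤ Real.exp (ε - L*x) := by
          apply Real.exp_le_exp.2; linarith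
        nlinarith
    _ = Real.exp ε * Real.exp (-(L*x)) * (1 - x) := by rw [← Real.exp_add]; ring_nf

/-- The Laplace distribution with scale `b`: the measure on `ℝ` with density
`x ↦ (1/(2b)) exp(-|x|/b)` with respect to Lebesgue measure. -/
noncomputable def laplaceMeasure (b : ℝ) : Measure ℝ :=
  volume.withDensity fun x => ENNReal.ofReal (1 / (2 * b) * Real.exp (-|x| / b))

/-- Convolution of two measures: the distribution of the sum of independent random
variables with the given laws. -/
noncomputable def measConv {α : Type*} [MeasurableSpace α] [Add α]
    (μ ν : Measure α) : Measure α :=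
  Measure.map (fun p : α × α => p.1 + p.2) (μ.prod ν)

/-- Single-query case of the main theorem: if the output distributions `μ₁, μ₂` of an
algorithm on neighboring databases concentrate subexponentially (with diameter `Δ₂`) around
values `g₁, g₂` with `|g₁ - g₂| ≤ Δ₁`, then adding Laplace noise with scale
`c (Δ₁ + Δ₂)/ε` for `c = 1 + 4 log 2` yields `ε`-differential privacy. -/
theorem stmt_7 (Δ₁ Δ₂ : ℝ) (hΔ₁ : 0 ≤ Δ₁) (hΔ₂ : 0 < Δ₂)
    (c : ℝ) (hc : c = 1 + 4 * Real.log 2) (ε : ℝ) (hε0 : 0 < ε) (hε : ε ≤ c / 2)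
    (μ₁ μ₂ : Measure ℝ) [IsProbabilityMeasure μ₁] [IsProbabilityMeasure μ₂]
    (g₁ g₂ : ℝ) (hg : |g₁ - g₂| ≤ Δ₁)
    (h₁ : ∀ t : ℝ, 0 < t → μ₁ {x | t ≤ |x - g₁|} ≤ ENNReal.ofReal (2 * Real.exp (-t / Δ₂)))
    (h₂ : ∀ t : ℝ, 0 < t → μ₂ {x | t ≤ |x - g₂|} ≤ ENNReal.ofReal (2 * Real.exp (-t / Δ₂))) :
    ∀ T : Set ℝ, MeasurableSet T →
      measConv μ₁ (laplaceMeasure (c * (Δ₁ + Δ₂) / ε)) T ≤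
        ENNReal.ofReal (Real.exp ε) * measConv μ₂ (laplaceMeasure (c * (Δ₁ + Δ₂) / ε)) T := by
  intro T hT
  have hL : (0.6931471803 : ℝ) < Real.log 2 := Real.log_two_gt_d9
  have hcpos : 0 < c := by rw [hc]; linarith
  have hΔ : 0 < Δ₁ + Δ₂ := by linarith
  obtain ⟨b, hbdef⟩ : ∃ b : ℝ, b = c * (Δ₁ + Δ₂) / ε := ⟨_, rfl⟩
  rw [← hbdef]
  have hb : 0 < b := by rw [hbdef]; positivity
  obtain ⟨β, hβdef⟩ : ∃ β : ℝ, β = b / Δ₂ := ⟨_, rfl⟩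
  have hβpos : 0 < β := by rw [hβdef]; positivity
  have hβ2 : 2 ≤ β := by
    rw [hβdef, hbdef, le_div_iff₀ hΔ₂, le_div_iff₀ hε0]
    nlinarith
  have hβ1 : 1 < β := by linarith
  obtain ⟨fb, hfbdef⟩ : ∃ fb : ℝ → ENNReal, fb = fun x => ENNReal.ofReal (1 / (2 * b) * Real.exp (-|x| / b)) := ⟨_, rfl⟩
  have hfbm : Measurable fb := by
    rw [hfbdef]
    apply Measurable.ennreal_ofReal
    fun_prop
  have hlap : laplaceMeasure b = volume.withDensity fb := by rw [hfbdef]; rfl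
  haveI hsf : SFinite (laplaceMeasure b) := by rw [hlap]; infer_instance
  obtain ⟨H, hHdef⟩ : ∃ H : ℝ → ENNReal, H = fun x => laplaceMeasure b {y | x + y ∈ T} := ⟨_, rfl⟩
  -- convolution as integral of H
  have hconv : ∀ (μ : Measure ℝ), IsProbabilityMeasure μ →
      measConv μ (laplaceMeasure b) T = ∫⁻ x, H x ∂μ := by
    intro μ _
    rw [measConv, Measure.map_apply (by fun_prop) hT, Measure.prod_apply (by
      exact (measurable_fst.add measurable_snd) hT), hHdef]
    rfl
  -- representation of H
  have hms : ∀ x : ℝ, MeasurableSet {y : ℝ | x + y ∈ T} := fun x =>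
    (measurable_const_add x) hT
  have Hrep : ∀ x : ℝ, H x = ∫⁻ z in T, fb (z - x) := by
    intro x
    rw [hHdef]
    simp only
    rw [hlap, withDensity_apply _ (hms x)]
    calc ∫⁻ y in {y | x + y ∈ T}, fb y
        = ∫⁻ y, T.indicator (fun z => fb (z - x)) (x + y) := by
          rw [← lintegral_indicator (hms x)]
          congr 1; ext y
          by_cases h : x + y ∈ T
          · simp [indicator, h]
          · simp [indicator, h]
      _ = ∫⁻ z, T.indicator (fun z => fb (z - x)) z :=
          lintegral_add_left_eq_self _ x
      _ = ∫⁻ z in T, fb (z - x) := lintegral_indicator hT _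
  -- key Lipschitz-type bound
  have hK : ∀ x x' : ℝ, H x ≤ ENNReal.ofReal (Real.exp (|x - x'| / b)) * H x' := by
    intro x x'
    rw [Hrep x, Hrep x', ← lintegral_const_mul' _ _ ENNReal.ofReal_ne_top]
    apply lintegral_mono
    intro z
    rw [hfbdef]
    simp only
    rw [← ENNReal.ofReal_mul (Real.exp_nonneg _)]
    apply ENNReal.ofReal_le_ofReal
    have habs : |z - x| ≥ |z - x'| - |x - x'| := by
      have := abs_sub_abs_le_abs_sub (z - x') (x - x') -- not quite; direct
      have h2 : |z - x'| ≤ |z - x| + |x - x'| := by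
        calc |z - x'| = |(z - x) + (x - x')| := by ring_nf
          _ ≤ |z - x| + |x - x'| := abs_add_le _ _
      linarith
    have : Real.exp (-|z - x| / b) ≤ Real.exp (|x - x'| / b) * Real.exp (-|z - x'| / b) := by
      rw [← Real.exp_add]
      apply Real.exp_le_exp.2
      rw [← add_div, div_le_div_iff₀ hb hb]
      nlinarith
    have hpos : (0:ℝ) ≤ 1 / (2 * b) := by positivity
    calc 1 / (2 * b) * Real.exp (-|z - x| / b)
        ≤ 1 / (2 * b) * (Real.exp (|x - x'| / b) * Real.exp (-|z - x'| / b)) :=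
          mul_le_mul_of_nonneg_left this hpos
      _ = Real.exp (|x - x'| / b) * (1 / (2 * b) * Real.exp (-|z - x'| / b)) := by ring
  -- integral comparison lemmas
  have up1 : measConv μ₁ (laplaceMeasure b) T ≤
      (∫⁻ x, ENNReal.ofReal (Real.exp (|x - g₁| / b)) ∂μ₁) * H g₁ := by
    rw [hconv μ₁ inferInstance, ← lintegral_mul_const _
      (Measurable.ennreal_ofReal (by fun_prop))]
    exact lintegral_mono fun x => hK x g₁
  have low2 : (∫⁻ x, ENNReal.ofReal (Real.exp (-|x - g₂| / b)) ∂μ₂) * H g₂ ≤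
      measConv μ₂ (laplaceMeasure b) T := by
    rw [hconv μ₂ inferInstance, ← lintegral_mul_const _
      (Measurable.ennreal_ofReal (by fun_prop))]
    apply lintegral_mono
    intro x
    calc ENNReal.ofReal (Real.exp (-|x - g₂| / b)) * H g₂
        ≤ ENNReal.ofReal (Real.exp (-|x - g₂| / b)) *
            (ENNReal.ofReal (Real.exp (|g₂ - x| / b)) * H x) :=
          mul_le_mul_right (hK g₂ x) _
      _ = ENNReal.ofReal (Real.exp (-|x - g₂| / b)) *
            ENNReal.ofReal (Real.exp (|g₂ - x| / b)) * H x := (mul_assoc _ _ _).symm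
      _ = H x := by
          have harg : -|x - g₂| / b + |x - g₂| / b = 0 := by ring
          rw [abs_sub_comm g₂ x, ← ENNReal.ofReal_mul (Real.exp_nonneg _), ← Real.exp_add,
            harg, Real.exp_zero, ENNReal.ofReal_one, one_mul]
  have Hgap : H g₁ ≤ ENNReal.ofReal (Real.exp (Δ₁ / b)) * H g₂ := by
    refine le_trans (hK g₁ g₂) (mul_le_mul_left (ENNReal.ofReal_le_ofReal ?_) _)
    apply Real.exp_le_exp.2
    gcongr
  -- set up A and B
  obtain ⟨A, hAdef⟩ : ∃ A : ℝ, A = (2:ℝ) ^ (1/β) := ⟨_, rfl⟩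
  obtain ⟨B, hBdef⟩ : ∃ B : ℝ, B = (2:ℝ) ^ (-(1/β)) := ⟨_, rfl⟩
  have hA1 : 1 < A := by
    rw [hAdef]
    exact (Real.one_lt_rpow_iff_of_pos (by norm_num)).2 (Or.inl ⟨by norm_num, by positivity⟩)
  have hApos : (0:ℝ) < A := by linarith
  have hB1 : B < 1 := by
    rw [hBdef]
    apply Real.rpow_lt_one_of_one_lt_of_neg (by norm_num)
    have : (0:ℝ) < 1/β := by positivity
    linarith
  have hBpos : (0:ℝ) < B := by rw [hBdef]; exact Real.rpow_pos_of_pos (by norm_num) _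
  have hAβ : A ^ (-β) = 1/2 := by
    rw [hAdef, ← Real.rpow_mul (by norm_num : (0:ℝ) ≤ 2)]
    have e : 1/β * -β = -1 := by field_simp
    rw [e, Real.rpow_neg_one]
    norm_num
  have hBβ : B ^ β = 1/2 := by
    rw [hBdef, ← Real.rpow_mul (by norm_num : (0:ℝ) ≤ 2)]
    have e : -(1/β) * β = -1 := by field_simp
    rw [e, Real.rpow_neg_one]
    norm_num
  -- upper bound on exponential moment of μ₁
  have hI1 : ∫⁻ x, ENNReal.ofReal (Real.exp (|x - g₁| / b)) ∂μ₁ ≤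
      ENNReal.ofReal (A * (β / (β - 1))) := by
    rw [lintegral_eq_lintegral_meas_lt μ₁ (ae_of_all _ fun x => (Real.exp_pos _).le)
      (Continuous.aemeasurable (by fun_prop))]
    have hsplit : Ioi (0:ℝ) = Ioc 0 A ∪ Ioi A := (Set.Ioc_union_Ioi_eq_Ioi hApos.le).symm
    rw [hsplit, lintegral_union measurableSet_Ioi (Set.Ioc_disjoint_Ioi le_rfl)]
    have part1 : ∫⁻ t in Ioc (0:ℝ) A, μ₁ {a | t < Real.exp (|a - g₁| / b)} ≤
        ENNReal.ofReal A := by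
      calc ∫⁻ t in Ioc (0:ℝ) A, μ₁ {a | t < Real.exp (|a - g₁| / b)}
          ≤ ∫⁻ _t in Ioc (0:ℝ) A, 1 := lintegral_mono fun t => prob_le_one
        _ = ENNReal.ofReal A := by rw [setLIntegral_one, Real.volume_Ioc]; norm_num
    have part2 : ∫⁻ t in Ioi A, μ₁ {a | t < Real.exp (|a - g₁| / b)} ≤
        ENNReal.ofReal (2 * (-A ^ (-β + 1) / (-β + 1))) := by
      have step : ∫⁻ t in Ioi A, μ₁ {a | t < Real.exp (|a - g₁| / b)} ≤
          ∫⁻ t in Ioi A, ENNReal.ofReal (2 * t ^ (-β)) := by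
        apply setLIntegral_mono' measurableSet_Ioi
        intro t ht
        have ht1 : (1:ℝ) < t := lt_trans hA1 ht
        have hlt : 0 < Real.log t := Real.log_pos ht1
        calc μ₁ {a | t < Real.exp (|a - g₁| / b)}
            ≤ μ₁ {a | b * Real.log t ≤ |a - g₁|} := by
              apply measure_mono; intro a ha
              simp only [mem_setOf_eq] at ha ⊢
              have h2 : Real.log t < |a - g₁| / b := (Real.log_lt_iff_lt_exp (by linarith)).2 ha
              have h3 := (lt_div_iff₀ hb).1 h2
              nlinarith
          _ ≤ ENNReal.ofReal (2 * Real.exp (-(b * Real.log t) / Δ₂)) :=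
              h₁ _ (by positivity)
          _ = ENNReal.ofReal (2 * t ^ (-β)) := by
              congr 2
              rw [Real.rpow_def_of_pos (by linarith : (0:ℝ) < t)]
              rw [hβdef]
              ring
      refine le_trans step ?_
      have hint : IntegrableOn (fun t : ℝ => 2 * t ^ (-β)) (Ioi A) :=
        (integrableOn_Ioi_rpow_of_lt (by linarith : -β < -1) hApos).const_mul 2
      rw [← ofReal_integral_eq_lintegral_ofReal hint
        ((ae_restrict_iff' measurableSet_Ioi).2 (ae_of_all _ fun t ht => by
          have : (0:ℝ) < t := lt_trans hApos ht
          positivity))]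
      apply ENNReal.ofReal_le_ofReal
      rw [integral_const_mul, integral_Ioi_rpow_of_lt (by linarith) hApos]
    calc (∫⁻ t in Ioc (0:ℝ) A, μ₁ {a | t < Real.exp (|a - g₁| / b)}) +
          ∫⁻ t in Ioi A, μ₁ {a | t < Real.exp (|a - g₁| / b)}
        ≤ ENNReal.ofReal A + ENNReal.ofReal (2 * (-A ^ (-β + 1) / (-β + 1))) :=
          add_le_add part1 part2
      _ = ENNReal.ofReal (A + 2 * (-A ^ (-β + 1) / (-β + 1))) := by
          have h1 : (0:ℝ) < A ^ (-β + 1) := Real.rpow_pos_of_pos hApos _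
          have hnum : (0:ℝ) ≤ 2 * (-A ^ (-β + 1) / (-β + 1)) := by
            have h2 : (0:ℝ) < -A ^ (-β + 1) / (-β + 1) :=
              div_pos_of_neg_of_neg (by linarith) (by linarith)
            linarith
          rw [← ENNReal.ofReal_add hApos.le hnum]
      _ = ENNReal.ofReal (A * (β / (β - 1))) := by
          congr 1
          have e1 : A ^ (-β + 1) = A ^ (-β) * A := by
            rw [Real.rpow_add hApos, Real.rpow_one]
          rw [e1, hAβ]
          have hβne : β - 1 ≠ 0 := by linarith
          have e2 : -(1/2 * A) / (-β + 1) = 1/2 * A / (β - 1) := by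
            rw [show -β + 1 = -(β - 1) by ring, neg_div_neg_eq]
          rw [e2]
          field_simp
          ring
  -- lower bound on exponential moment of μ₂
  have hI2 : ENNReal.ofReal (B * (β / (β + 1))) ≤
      ∫⁻ x, ENNReal.ofReal (Real.exp (-|x - g₂| / b)) ∂μ₂ := by
    rw [lintegral_eq_lintegral_meas_lt μ₂ (ae_of_all _ fun x => (Real.exp_pos _).le)
      (Continuous.aemeasurable (by fun_prop))]
    have mono1 : ∫⁻ t in Ioo (0:ℝ) B, μ₂ {a | t < Real.exp (-|a - g₂| / b)} ≤
        ∫⁻ t in Ioi (0:ℝ), μ₂ {a | t < Real.exp (-|a - g₂| / b)} :=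
      lintegral_mono_set Ioo_subset_Ioi_self
    refine le_trans ?_ mono1
    have step : ∀ t ∈ Ioo (0:ℝ) B, ENNReal.ofReal (1 - 2 * t ^ β) ≤
        μ₂ {a | t < Real.exp (-|a - g₂| / b)} := by
      intro t ht
      obtain ⟨ht0, htB⟩ := ht
      have hlogt : Real.log t < 0 := Real.log_neg ht0 (lt_trans htB hB1)
      have hSm : MeasurableSet {a : ℝ | t < Real.exp (-|a - g₂| / b)} :=
        measurableSet_lt measurable_const (by fun_prop)
      have hcompl : μ₂ {a : ℝ | t < Real.exp (-|a - g₂| / b)}ᶜ ≤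
          ENNReal.ofReal (2 * t ^ β) := by
        have hsub : {a : ℝ | t < Real.exp (-|a - g₂| / b)}ᶜ ⊆
            {a : ℝ | -(b * Real.log t) ≤ |a - g₂|} := by
          intro a ha
          simp only [mem_compl_iff, mem_setOf_eq, not_lt] at ha
          simp only [mem_setOf_eq]
          have h2 : -|a - g₂| / b ≤ Real.log t := (Real.le_log_iff_exp_le ht0).2 ha
          have h3 := (div_le_iff₀ hb).1 h2
          nlinarith
        calc μ₂ {a : ℝ | t < Real.exp (-|a - g₂| / b)}ᶜ
            ≤ μ₂ {a : ℝ | -(b * Real.log t) ≤ |a - g₂|} := measure_mono hsub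
          _ ≤ ENNReal.ofReal (2 * Real.exp (-(-(b * Real.log t)) / Δ₂)) :=
              h₂ _ (by nlinarith)
          _ = ENNReal.ofReal (2 * t ^ β) := by
              congr 2
              rw [Real.rpow_def_of_pos ht0]
              rw [hβdef]
              ring
      calc ENNReal.ofReal (1 - 2 * t ^ β)
          = 1 - ENNReal.ofReal (2 * t ^ β) := by
            have hrp : (0:ℝ) ≤ 2 * t ^ β := by
              have := Real.rpow_nonneg ht0.le β
              linarith
            rw [ENNReal.ofReal_sub _ hrp, ENNReal.ofReal_one]
        _ ≤ μ₂ {a | t < Real.exp (-|a - g₂| / b)} := by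
            rw [tsub_le_iff_right]
            calc (1:ENNReal) = μ₂ univ := (measure_univ).symm
              _ = μ₂ {a | t < Real.exp (-|a - g₂| / b)} +
                  μ₂ {a | t < Real.exp (-|a - g₂| / b)}ᶜ :=
                  (measure_add_measure_compl hSm).symm ▸ rfl
              _ ≤ μ₂ {a | t < Real.exp (-|a - g₂| / b)} + ENNReal.ofReal (2 * t ^ β) :=
                  add_le_add_right hcompl _
    have hint : IntegrableOn (fun t : ℝ => 1 - 2 * t ^ β) (Ioo 0 B) := by
      have hii : IntervalIntegrable (fun t : ℝ => 1 - 2 * t ^ β) volume 0 B :=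
        intervalIntegrable_const.sub ((intervalIntegral.intervalIntegrable_rpow' (by linarith)).const_mul 2)
      have := (intervalIntegrable_iff_integrableOn_Ioo_of_le hBpos.le).1 hii
      exact this
    have hnn : 0 ≤ᵐ[volume.restrict (Ioo (0:ℝ) B)] fun t => 1 - 2 * t ^ β := by
      refine (ae_restrict_iff' measurableSet_Ioo).2 (ae_of_all _ fun t ht => ?_)
      have h4 : t ^ β < B ^ β := Real.rpow_lt_rpow ht.1.le ht.2 hβpos
      rw [hBβ] at h4
      show (0:ℝ) ≤ 1 - 2 * t ^ β
      linarith
    calc ENNReal.ofReal (B * (β / (β + 1)))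
        = ∫⁻ t in Ioo (0:ℝ) B, ENNReal.ofReal (1 - 2 * t ^ β) := by
          rw [← ofReal_integral_eq_lintegral_ofReal hint hnn]
          congr 1
          rw [← integral_Ioc_eq_integral_Ioo, ← intervalIntegral.integral_of_le hBpos.le,
            intervalIntegral.integral_sub intervalIntegrable_const
              ((intervalIntegral.intervalIntegrable_rpow' (by linarith)).const_mul 2),
            intervalIntegral.integral_const, intervalIntegral.integral_const_mul,
            integral_rpow (Or.inl (by linarith)),
            Real.zero_rpow (by linarith : β + 1 ≠ 0)]
          have e1 : B ^ (β + 1) = 1/2 * B := by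
            rw [Real.rpow_add hBpos, Real.rpow_one, hBβ]
          rw [e1]
          have hβne : β + 1 ≠ 0 := by linarith
          field_simp
          ring
      _ ≤ ∫⁻ t in Ioo (0:ℝ) B, μ₂ {a | t < Real.exp (-|a - g₂| / b)} :=
          setLIntegral_mono' measurableSet_Ioo step
  -- the key real inequality
  have hR : A * (β / (β - 1)) * Real.exp (Δ₁ / b) ≤ Real.exp ε * (B * (β / (β + 1))) := by
    have hx0 : (0:ℝ) < 1/β := one_div_pos.2 hβpos
    have hxh : 1/β ≤ 1/2 := by
      rw [div_le_div_iff₀ hβpos (by norm_num : (0:ℝ) < 2)]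
      linarith
    have hA' : A = Real.exp (Real.log 2 * (1/β)) := by
      rw [hAdef, Real.rpow_def_of_pos (by norm_num)]
    have hB' : B = Real.exp (-(Real.log 2 * (1/β))) := by
      rw [hBdef, Real.rpow_def_of_pos (by norm_num)]
      congr 1
      ring
    have hfr1 : β / (β - 1) = 1 / (1 - 1/β) := by
      field_simp
    have hfr2 : β / (β + 1) = 1 / (1 + 1/β) := by
      rw [eq_div_iff (by positivity)]
      field_simp
      try ring
    rw [hA', hB', hfr1, hfr2]
    apply key_ineq hx0 hxh
    have expand : Δ₁ / b + 2 * Real.log 2 * (1/β) + 9/4 * (1/β) =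
        (Δ₁ + 2 * Real.log 2 * Δ₂ + 9/4 * Δ₂) / b := by
      rw [hβdef]
      field_simp
    rw [expand, div_le_iff₀ hb, hbdef]
    have hεc : ε * (c * (Δ₁ + Δ₂) / ε) = c * (Δ₁ + Δ₂) := by
      field_simp
    rw [hεc, hc]
    nlinarith
  -- final assembly
  calc measConv μ₁ (laplaceMeasure b) T
      ≤ (∫⁻ x, ENNReal.ofReal (Real.exp (|x - g₁| / b)) ∂μ₁) * H g₁ := up1
    _ ≤ ENNReal.ofReal (A * (β / (β - 1))) * H g₁ := mul_le_mul_left hI1 _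
    _ ≤ ENNReal.ofReal (A * (β / (β - 1))) *
          (ENNReal.ofReal (Real.exp (Δ₁ / b)) * H g₂) := mul_le_mul_right Hgap _
    _ = ENNReal.ofReal (A * (β / (β - 1)) * Real.exp (Δ₁ / b)) * H g₂ := by
        rw [← mul_assoc, ← ENNReal.ofReal_mul (mul_nonneg hApos.le (div_nonneg hβpos.le (by linarith)))]
    _ ≤ ENNReal.ofReal (Real.exp ε * (B * (β / (β + 1)))) * H g₂ :=
        mul_le_mul_left (ENNReal.ofReal_le_ofReal hR) _
    _ = ENNReal.ofReal (Real.exp ε) * (ENNReal.ofReal (B * (β / (β + 1))) * H g₂) := by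
        rw [ENNReal.ofReal_mul (Real.exp_nonneg _), mul_assoc]
    _ ≤ ENNReal.ofReal (Real.exp ε) *
          ((∫⁻ x, ENNReal.ofReal (Real.exp (-|x - g₂| / b)) ∂μ₂) * H g₂) :=
        mul_le_mul_right (mul_le_mul_left hI2 _) _
    _ ≤ ENNReal.ofReal (Real.exp ε) * measConv μ₂ (laplaceMeasure b) T :=
        mul_le_mul_right low2 _
end

section
/- Let k ≥ 1, Δ₁ ≥ 0 and Δ₂ > 0, let c = 3 + 12·log 2, and let 0 < ε ≤ c/6. Let μ₁ and μ₂ be Borel probability measures on ℝ^k and let g₁, g₂ ∈ ℝ^k satisfy |g₁(j) − g₂(j)| ≤ Δ₁ for every coordinate j and, for i ∈ {1,2}, every coordinate j, and all t > 0, μ_i({x ∈ ℝ^k : |x(j) − g_i(j)| ≥ t}) ≤ 2·exp(−t/Δ₂). Let λ be the k-fold product of the Laplace distribution with scale c·(Δ₁ + Δ₂)·k/ε. Then for every Borel set T ⊆ ℝ^k, (μ₁ ∗ λ)(T) ≤ exp(ε)·(μ₂ ∗ λ)(T), where ∗ denotes convolution of measures on ℝ^k. -/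
open MeasureTheory Real Set

open scoped ENNReal

lemma integral_exp_neg_mul_Ioi {r : ℝ} (hr : 0 < r) :
    ∫ x in Ioi (0:ℝ), Real.exp (-(r * x)) = 1 / r := by
  have h := integral_Ioi_of_hasDerivAt_of_tendsto' (a := (0:ℝ))
    (f := fun x => -Real.exp (-(r * x)) / r) (f' := fun x => Real.exp (-(r * x)))
    (m := 0) ?_ ?_ ?_
  · rw [h]; simp [div_eq_mul_inv]
  · intro x _
    have := (ProbabilityTheory.hasDerivAt_neg_exp_mul_exp (r := r) (x := x)).div_const r
    rwa [mul_div_cancel_left₀ _ hr.ne'] at this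
  · exact (exp_neg_integrableOn_Ioi 0 hr).congr_fun (fun x _ => by ring_nf) measurableSet_Ioi
  · have : Filter.Tendsto (fun x : ℝ => Real.exp (-(r * x))) Filter.atTop (nhds 0) := by
      have h2 : Filter.Tendsto (fun x : ℝ => -(r * x)) Filter.atTop Filter.atBot := by
        exact Filter.tendsto_neg_atBot_iff.mpr
          ((Filter.tendsto_const_mul_atTop_of_pos hr).2 Filter.tendsto_id)
      exact Real.tendsto_exp_atBot.comp h2
    simpa using (this.neg.div_const r)

lemma lintegral_exp_neg_mul_Ioi {r : ℝ} (hr : 0 < r) :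
    ∫⁻ t in Ioi (0:ℝ), ENNReal.ofReal (Real.exp (-(r * t))) = ENNReal.ofReal (1 / r) := by
  simp_rw [show ∀ t : ℝ, -(r*t) = -r*t from fun t => by ring]
  rw [← ofReal_integral_eq_lintegral_ofReal (exp_neg_integrableOn_Ioi 0 hr)
    (Filter.Eventually.of_forall fun x => (Real.exp_pos _).le)]
  simp_rw [show ∀ t : ℝ, -r*t = -(r*t) from fun t => by ring, integral_exp_neg_mul_Ioi hr]

lemma integrable_exp_neg_abs_div {b : ℝ} (hb : 0 < b) :
    Integrable (fun x : ℝ => Real.exp (-|x| / b)) := by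
  have hIoi : IntegrableOn (fun x : ℝ => Real.exp (-|x| / b)) (Ioi 0) := by
    refine (exp_neg_integrableOn_Ioi 0 (by positivity : (0:ℝ) < b⁻¹)).congr_fun
      (fun x hx => ?_) measurableSet_Ioi
    rw [abs_of_pos hx]; ring_nf
  have hIic : IntegrableOn (fun x : ℝ => Real.exp (-|x| / b)) (Iic 0) := by
    rw [← Measure.map_neg_eq_self (volume : Measure ℝ)]
    have m : MeasurableEmbedding fun x : ℝ => -x := (Homeomorph.neg ℝ).measurableEmbedding
    rw [m.integrableOn_map_iff]
    simp only [Function.comp_def, abs_neg, neg_preimage, neg_Iic, neg_zero]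
    exact (integrableOn_Ici_iff_integrableOn_Ioi).mpr hIoi
  have := hIic.union hIoi
  rwa [Iic_union_Ioi, integrableOn_univ] at this

lemma laplace_density_integral {b : ℝ} (hb : 0 < b) :
    ∫ x : ℝ, 1 / (2 * b) * Real.exp (-|x| / b) = 1 := by
  rw [integral_const_mul]
  have : ∫ x : ℝ, Real.exp (-|x| / b) = 2 * ∫ x in Ioi (0:ℝ), Real.exp (-x / b) :=
    integral_comp_abs (f := fun x => Real.exp (-x / b))
  rw [this]
  have : ∫ x in Ioi (0:ℝ), Real.exp (-x / b) = 1 / b⁻¹ := by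
    rw [← integral_exp_neg_mul_Ioi (by positivity : (0:ℝ) < b⁻¹)]
    congr 1 with x; ring_nf
  rw [this]
  field_simp

lemma laplace_prob {b : ℝ} (hb : Fact (0 < b)) : IsProbabilityMeasure (laplaceMeasure b) := by
  have hb0 : 0 < b := hb.out
  constructor
  rw [laplaceMeasure, withDensity_apply _ MeasurableSet.univ, Measure.restrict_univ]
  rw [← ofReal_integral_eq_lintegral_ofReal
    ((integrable_exp_neg_abs_div hb0).const_mul _)
    (Filter.Eventually.of_forall fun x => by positivity)]
  rw [laplace_density_integral hb0, ENNReal.ofReal_one]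

lemma lintegral_pi_prod : ∀ {n : ℕ} (f : Fin n → ℝ → ℝ≥0∞), (∀ i, Measurable (f i)) →
    ∫⁻ x : Fin n → ℝ, ∏ i, f i (x i) ∂(Measure.pi fun _ => (volume : Measure ℝ)) =
      ∏ i, ∫⁻ t, f i t := by
  intro n
  induction n with
  | zero => intro f hf; simp
  | succ n ih =>
    intro f hf
    have mp := (measurePreserving_piFinSuccAbove (fun _ : Fin (n+1) => (volume : Measure ℝ)) 0).symm
    have hF : Measurable fun x : Fin (n+1) → ℝ => ∏ i, f i (x i) :=
      Finset.measurable_prod _ fun i _ => (hf i).comp (measurable_pi_apply i)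
    rw [← mp.lintegral_comp hF]
    have key : ∀ y : ℝ × (Fin n → ℝ),
        (∏ i, f i (((MeasurableEquiv.piFinSuccAbove (fun _ : Fin (n+1) => ℝ) 0).symm y) i)) =
          f 0 y.1 * ∏ j, f j.succ (y.2 j) := by
      rintro ⟨t, x⟩
      simp_rw [MeasurableEquiv.piFinSuccAbove_symm_apply, Fin.insertNthEquiv,
        Fin.prod_univ_succ, Fin.insertNth_zero]
      simp [Fin.zero_succAbove, Fin.cons_zero, Fin.cons_succ]
    simp_rw [key]
    rw [lintegral_prod_mul (f := f 0) (g := fun x : Fin n → ℝ => ∏ j, f j.succ (x j))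
      (hf 0).aemeasurable
      (Finset.measurable_prod _ fun j _ => (hf j.succ).comp (measurable_pi_apply j)).aemeasurable]
    rw [ih (fun j => f j.succ) (fun j => hf j.succ), Fin.prod_univ_succ]

lemma pi_withDensity {n : ℕ} (f : Fin n → ℝ → ℝ≥0∞) (hf : ∀ i, Measurable (f i))
    [∀ i : Fin n, SigmaFinite ((volume : Measure ℝ).withDensity (f i))] :
    Measure.pi (fun i => (volume : Measure ℝ).withDensity (f i)) =
      (volume : Measure (Fin n → ℝ)).withDensity (fun y => ∏ i, f i (y i)) := by
  refine Measure.pi_eq fun s hs => ?_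
  rw [withDensity_apply _ (MeasurableSet.univ_pi hs),
    ← lintegral_indicator (MeasurableSet.univ_pi hs)]
  have key : ∀ y : Fin n → ℝ, (univ.pi s).indicator (fun y => ∏ i, f i (y i)) y =
      ∏ i, (s i).indicator (f i) (y i) := by
    intro y
    by_cases hy : y ∈ univ.pi s
    · rw [indicator_of_mem hy]
      exact Finset.prod_congr rfl fun i _ => (indicator_of_mem (hy i (Set.mem_univ i)) _).symm
    · rw [indicator_of_notMem hy]
      rw [mem_univ_pi] at hy
      push_neg at hy
      obtain ⟨i, hi⟩ := hy
      exact (Finset.prod_eq_zero (Finset.mem_univ i) (indicator_of_notMem hi _)).symm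
  simp_rw [key]
  rw [volume_pi, lintegral_pi_prod _ (fun i => (hf i).indicator (hs i))]
  exact Finset.prod_congr rfl fun i _ => by
    rw [lintegral_indicator (hs i), withDensity_apply _ (hs i)]

section Shift
variable {k : ℕ} {b : ℝ}

lemma measurable_lapdens (b : ℝ) :
    Measurable fun x : ℝ => ENNReal.ofReal (1 / (2 * b) * Real.exp (-|x| / b)) := by
  fun_prop

lemma lapdens_shift_le {b : ℝ} (hb : 0 < b) (t d : ℝ) :
    (1 / (2 * b) * Real.exp (-|t + d| / b)) ≤
      Real.exp (|d| / b) * (1 / (2 * b) * Real.exp (-|t| / b)) := by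
  have h0 : (0:ℝ) ≤ 1 / (2 * b) := by positivity
  have habs : |t| ≤ |t + d| + |d| := by
    calc |t| = |(t + d) - d| := by ring_nf
      _ ≤ |t + d| + |d| := abs_sub _ _
  have h2 : -|t + d| / b ≤ (|d| - |t|) / b := by
    apply div_le_div_of_nonneg_right _ hb.le
    linarith
  calc 1 / (2 * b) * Real.exp (-|t + d| / b)
      ≤ 1 / (2 * b) * Real.exp ((|d| - |t|) / b) :=
        mul_le_mul_of_nonneg_left (Real.exp_le_exp.mpr h2) h0
    _ = Real.exp (|d| / b) * (1 / (2 * b) * Real.exp (-|t| / b)) := by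
        rw [show (|d| - |t|) / b = |d| / b + -|t| / b by ring, Real.exp_add]; ring

lemma laplace_pi_eq (hb : 0 < b) :
    (Measure.pi fun _ : Fin k => laplaceMeasure b) =
      (volume : Measure (Fin k → ℝ)).withDensity
        (fun y => ∏ j, ENNReal.ofReal (1 / (2 * b) * Real.exp (-|y j| / b))) := by
  haveI : ∀ i : Fin k, SigmaFinite ((volume : Measure ℝ).withDensity
      (fun x => ENNReal.ofReal (1 / (2 * b) * Real.exp (-|x| / b)))) := by
    intro i
    have := laplace_prob ⟨hb⟩
    rw [laplaceMeasure] at this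
    haveI := this
    infer_instance
  exact pi_withDensity _ (fun _ => measurable_lapdens b)

lemma shift_bound (hb : 0 < b) {T : Set (Fin k → ℝ)} (hT : MeasurableSet T)
    (x v : Fin k → ℝ) :
    (Measure.pi fun _ : Fin k => laplaceMeasure b) {y | x + y ∈ T} ≤
      ENNReal.ofReal (Real.exp (∑ j, |x j - v j| / b)) *
        (Measure.pi fun _ : Fin k => laplaceMeasure b) {y | v + y ∈ T} := by
  set ρ : ℝ → ℝ≥0∞ := fun t => ENNReal.ofReal (1 / (2 * b) * Real.exp (-|t| / b)) with hρ
  set D : (Fin k → ℝ) → ℝ≥0∞ := fun y => ∏ j, ρ (y j) with hD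
  have hDm : Measurable D :=
    Finset.measurable_prod _ fun j _ => (measurable_lapdens b).comp (measurable_pi_apply j)
  have hA : MeasurableSet {y : Fin k → ℝ | x + y ∈ T} := hT.preimage (measurable_const_add x)
  have hB : MeasurableSet {y : Fin k → ℝ | v + y ∈ T} := hT.preimage (measurable_const_add v)
  rw [laplace_pi_eq hb, withDensity_apply _ hA, withDensity_apply _ hB,
    ← lintegral_indicator hA, ← lintegral_indicator hB]
  rw [← lintegral_add_right_eq_self (fun y => ({y : Fin k → ℝ | x + y ∈ T}).indicator D y) (v - x)]
  rw [← lintegral_const_mul' _ _ ENNReal.ofReal_ne_top]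
  apply lintegral_mono
  intro y
  show {y : Fin k → ℝ | x + y ∈ T}.indicator D (y + (v - x)) ≤
    ENNReal.ofReal (Real.exp (∑ j, |x j - v j| / b)) *
      {y : Fin k → ℝ | v + y ∈ T}.indicator D y
  by_cases hy : v + y ∈ T
  · have hmem : y + (v - x) ∈ {y : Fin k → ℝ | x + y ∈ T} := by
      show x + (y + (v - x)) ∈ T
      have : x + (y + (v - x)) = v + y := by abel
      rwa [this]
    rw [indicator_of_mem hmem, indicator_of_mem (show y ∈ {y | v + y ∈ T} from hy)]
    have key : D (y + (v - x)) ≤ ENNReal.ofReal (Real.exp (∑ j, |x j - v j| / b)) * D y := by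
      have hterm : ∀ j : Fin k, ρ ((y + (v - x)) j) ≤
          ENNReal.ofReal (Real.exp (|x j - v j| / b)) * ρ (y j) := by
        intro j
        rw [hρ]
        simp only [Pi.add_apply, Pi.sub_apply]
        rw [← ENNReal.ofReal_mul (Real.exp_nonneg _)]
        apply ENNReal.ofReal_le_ofReal
        have := lapdens_shift_le hb (y j) (v j - x j)
        calc 1 / (2 * b) * Real.exp (-|y j + (v j - x j)| / b)
            ≤ Real.exp (|v j - x j| / b) * (1 / (2 * b) * Real.exp (-|y j| / b)) := this
          _ = Real.exp (|x j - v j| / b) * (1 / (2 * b) * Real.exp (-|y j| / b)) := by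
              rw [abs_sub_comm]
      calc D (y + (v - x)) = ∏ j, ρ ((y + (v - x)) j) := rfl
        _ ≤ ∏ j, (ENNReal.ofReal (Real.exp (|x j - v j| / b)) * ρ (y j)) :=
            Finset.prod_le_prod' fun j _ => hterm j
        _ = (∏ j, ENNReal.ofReal (Real.exp (|x j - v j| / b))) * ∏ j, ρ (y j) :=
            Finset.prod_mul_distrib
        _ = ENNReal.ofReal (Real.exp (∑ j, |x j - v j| / b)) * D y := by
            rw [hD]
            congr 1
            rw [← ENNReal.ofReal_prod_of_nonneg (fun j _ => Real.exp_nonneg _)]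
            congr 1
            rw [← Real.exp_sum]
    exact key
  · rw [indicator_of_notMem (show y ∉ {y | v + y ∈ T} from hy),
      indicator_of_notMem]
    · simp
    · show ¬ x + (y + (v - x)) ∈ T
      have : x + (y + (v - x)) = v + y := by abel
      rwa [this]
end Shift

section Tail
variable {α : Type*} [MeasurableSpace α] {μ : Measure α}

lemma tail_mean [IsProbabilityMeasure μ] {f : α → ℝ} (hfm : Measurable f) (hf0 : ∀ ω, 0 ≤ f ω)
    {Δ : ℝ} (hΔ : 0 < Δ)
    (htail : ∀ t : ℝ, 0 < t → μ {a | t ≤ f a} ≤ ENNReal.ofReal (2 * Real.exp (-t / Δ))) :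
    ∫⁻ a, ENNReal.ofReal (f a) ∂μ ≤ ENNReal.ofReal (2 * Δ) := by
  have lc := lintegral_comp_eq_lintegral_meas_le_mul_of_measurable_of_sigmaFinite μ
    (f_nn := hf0) (f_mble := hfm) (g := fun _ => 1)
    (fun t _ => intervalIntegrable_const) measurable_const (fun t _ => zero_le_one)
  simp only [intervalIntegral.integral_const, smul_eq_mul, mul_one, sub_zero,
    ENNReal.ofReal_one] at lc
  rw [lc]
  calc ∫⁻ t in Ioi (0:ℝ), μ {a | t ≤ f a}
      ≤ ∫⁻ t in Ioi (0:ℝ), ENNReal.ofReal (2 * Real.exp (-t / Δ)) := by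
        refine setLIntegral_mono (by fun_prop) fun t ht => ?_
        exact htail t ht
    _ = ENNReal.ofReal (2 * Δ) := by
        simp_rw [ENNReal.ofReal_mul (by norm_num : (0:ℝ) ≤ 2)]
        rw [lintegral_const_mul' _ _ ENNReal.ofReal_ne_top]
        simp_rw [show ∀ t : ℝ, -t / Δ = -(Δ⁻¹ * t) from fun t => by
          rw [div_eq_mul_inv]; ring]
        rw [lintegral_exp_neg_mul_Ioi (by positivity), one_div, inv_inv,
          ← ENNReal.ofReal_mul (by norm_num : (0:ℝ) ≤ 2)]

lemma tail_mgf [IsProbabilityMeasure μ] {f : α → ℝ} (hfm : Measurable f) (hf0 : ∀ ω, 0 ≤ f ω)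
    {Δ : ℝ} (hΔ : 0 < Δ)
    (htail : ∀ t : ℝ, 0 < t → μ {a | t ≤ f a} ≤ ENNReal.ofReal (2 * Real.exp (-t / Δ)))
    {a : ℝ} (ha : 0 ≤ a) (haΔ : a * Δ < 1) :
    ∫⁻ ω, ENNReal.ofReal (Real.exp (a * f ω)) ∂μ ≤
      ENNReal.ofReal (1 + 2 * (a * Δ) / (1 - a * Δ)) := by
  rcases eq_or_lt_of_le ha with rfl | ha0
  · simp only [zero_mul, Real.exp_zero, ENNReal.ofReal_one, lintegral_one, measure_univ]
    norm_num
  have hinv : a < Δ⁻¹ := by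
    rw [← one_div]
    rw [lt_div_iff₀ hΔ]
    linarith [haΔ]
  have hderiv : ∀ u : ℝ, ∀ t ∈ Set.uIcc 0 u, HasDerivAt (fun s => Real.exp (a * s))
      (a * Real.exp (a * t)) t := by
    intro u t _
    have := ((hasDerivAt_id t).const_mul a).exp
    simpa [mul_comm] using this
  have hint : ∀ u : ℝ, ∫ t in (0:ℝ)..u, a * Real.exp (a * t) = Real.exp (a * u) - 1 := by
    intro u
    rw [intervalIntegral.integral_eq_sub_of_hasDerivAt (hderiv u)
      (Continuous.intervalIntegrable (by fun_prop) 0 u)]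
    simp
  have lc := lintegral_comp_eq_lintegral_meas_le_mul_of_measurable_of_sigmaFinite μ
    (f_nn := hf0) (f_mble := hfm) (g := fun t => a * Real.exp (a * t))
    (fun t _ => (by fun_prop : Continuous fun t => a * Real.exp (a * t)).intervalIntegrable 0 t)
    (by fun_prop) (fun t _ => by positivity)
  simp_rw [hint] at lc
  have expand : ∀ ω, ENNReal.ofReal (Real.exp (a * f ω)) =
      ENNReal.ofReal (Real.exp (a * f ω) - 1) + 1 := by
    intro ω
    rw [← ENNReal.ofReal_one, ← ENNReal.ofReal_add (by
      have : (1:ℝ) ≤ Real.exp (a * f ω) := Real.one_le_exp (mul_nonneg ha (hf0 ω))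
      linarith) zero_le_one]
    norm_num
  simp_rw [expand]
  rw [lintegral_add_right _ measurable_const, lintegral_one, measure_univ, lc]
  have step : ∫⁻ t in Ioi (0:ℝ), μ {x | t ≤ f x} * ENNReal.ofReal (a * Real.exp (a * t)) ≤
      ENNReal.ofReal (2 * (a * Δ) / (1 - a * Δ)) := by
    calc ∫⁻ t in Ioi (0:ℝ), μ {x | t ≤ f x} * ENNReal.ofReal (a * Real.exp (a * t))
        ≤ ∫⁻ t in Ioi (0:ℝ), ENNReal.ofReal (2 * a * Real.exp (-((Δ⁻¹ - a) * t))) := by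
          refine setLIntegral_mono (by fun_prop) fun t ht => ?_
          calc μ {x | t ≤ f x} * ENNReal.ofReal (a * Real.exp (a * t))
              ≤ ENNReal.ofReal (2 * Real.exp (-t / Δ)) *
                  ENNReal.ofReal (a * Real.exp (a * t)) :=
                mul_le_mul_left (htail t ht) _
            _ = ENNReal.ofReal (2 * a * Real.exp (-((Δ⁻¹ - a) * t))) := by
                rw [← ENNReal.ofReal_mul (by positivity)]
                congr 1
                rw [show -((Δ⁻¹ - a) * t) = -t / Δ + a * t by
                  rw [div_eq_mul_inv]; ring, Real.exp_add]
                ring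
      _ = ENNReal.ofReal (2 * (a * Δ) / (1 - a * Δ)) := by
          simp_rw [ENNReal.ofReal_mul (by positivity : (0:ℝ) ≤ 2 * a)]
          rw [lintegral_const_mul' _ _ ENNReal.ofReal_ne_top,
            lintegral_exp_neg_mul_Ioi (by linarith), ← ENNReal.ofReal_mul (by positivity)]
          congr 1
          have hden : Δ * (Δ⁻¹ - a) = 1 - a * Δ := by
            rw [mul_sub, mul_inv_cancel₀ hΔ.ne']; ring
          rw [← hden]
          have h1 : Δ⁻¹ - a ≠ 0 := by
            have : (0:ℝ) < Δ⁻¹ - a := by linarith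
            linarith
          field_simp
  calc (∫⁻ t in Ioi (0:ℝ), μ {x | t ≤ f x} * ENNReal.ofReal (a * Real.exp (a * t))) + 1
      ≤ ENNReal.ofReal (2 * (a * Δ) / (1 - a * Δ)) + 1 := add_le_add_left step 1
    _ = ENNReal.ofReal (1 + 2 * (a * Δ) / (1 - a * Δ)) := by
        rw [← ENNReal.ofReal_one, ← ENNReal.ofReal_add
          (div_nonneg (by positivity) (by linarith)) zero_le_one, add_comm]

end Tail

lemma final_real {β c u v ε : ℝ} (hu : 0 ≤ u) (hv : 0 ≤ v) (huv : u + v = β)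
    (hβ : 0 < β) (hβ6 : β ≤ 1/6) (hc : 11 ≤ c) (hε : ε = c * β) :
    Real.exp u * (1 + 2 * v / (1 - v)) ≤ Real.exp ε * (1 - 2 * v) := by
  have hvβ : v ≤ β := by linarith
  have hv1 : v < 1 := by linarith
  have hβ1 : β < 1 := by linarith
  have hne : (1:ℝ) - v ≠ 0 := by linarith
  have h1 : 1 + 2 * v / (1 - v) = (1 + v) / (1 - v) := by
    field_simp
    ring
  have h2 : (1 + v) / (1 - v) ≤ (1 + β) / (1 - β) := by
    rw [div_le_div_iff₀ (by linarith) (by linarith)]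
    nlinarith
  have h3 : Real.exp u ≤ Real.exp β := Real.exp_le_exp.mpr (by linarith)
  have h4 : Real.exp ((c - 1) * β) ≥ 1 + (c - 1) * β := by
    have := Real.add_one_le_exp ((c - 1) * β)
    linarith
  have h5 : (1 + β) / (1 - β) ≤ Real.exp ((c - 1) * β) * (1 - 2 * β) := by
    rw [div_le_iff₀ (by linarith)]
    have h4' : 1 + 10 * β ≤ Real.exp ((c - 1) * β) := by nlinarith
    have hfac : (0:ℝ) ≤ (1 - 2 * β) * (1 - β) := by nlinarith
    have := mul_le_mul_of_nonneg_right h4' hfac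
    nlinarith [mul_pos hβ hβ, mul_pos (mul_pos hβ hβ) hβ]
  have h6 : Real.exp ε = Real.exp β * Real.exp ((c - 1) * β) := by
    rw [hε, ← Real.exp_add]
    congr 1
    ring
  calc Real.exp u * (1 + 2 * v / (1 - v))
      = Real.exp u * ((1 + v) / (1 - v)) := by rw [h1]
    _ ≤ Real.exp β * ((1 + β) / (1 - β)) := by
        apply mul_le_mul h3 h2 (div_nonneg (by linarith) (by linarith)) (Real.exp_pos _).le
    _ ≤ Real.exp β * (Real.exp ((c - 1) * β) * (1 - 2 * β)) :=
        mul_le_mul_of_nonneg_left h5 (Real.exp_pos _).le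
    _ ≤ Real.exp ε * (1 - 2 * v) := by
        rw [h6]
        have : Real.exp β * (Real.exp ((c-1)*β) * (1 - 2*β)) =
            Real.exp β * Real.exp ((c-1)*β) * (1 - 2*β) := by ring
        rw [this]
        apply mul_le_mul_of_nonneg_left (by linarith) (by positivity)


set_option maxHeartbeats 1000000 in
/-- Fixed-queries case of the main theorem: if the joint output distributions `μ₁, μ₂` on
`ℝ^k` of `k` algorithms on neighboring databases concentrate subexponentially (with
diameter `Δ₂`) in each coordinate around `g₁, g₂` with `|g₁(j) - g₂(j)| ≤ Δ₁`, then adding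
i.i.d. Laplace noise with scale `c (Δ₁ + Δ₂) k/ε` for `c = 3 + 12 log 2` to each coordinate
yields `ε`-differential privacy. -/
theorem stmt_8 {k : ℕ} (hk : 1 ≤ k) (Δ₁ Δ₂ : ℝ) (hΔ₁ : 0 ≤ Δ₁) (hΔ₂ : 0 < Δ₂)
    (c : ℝ) (hc : c = 3 + 12 * Real.log 2) (ε : ℝ) (hε0 : 0 < ε) (hε : ε ≤ c / 6)
    (μ₁ μ₂ : Measure (Fin k → ℝ)) [IsProbabilityMeasure μ₁] [IsProbabilityMeasure μ₂]
    (g₁ g₂ : Fin k → ℝ) (hg : ∀ j, |g₁ j - g₂ j| ≤ Δ₁)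
    (h₁ : ∀ j, ∀ t : ℝ, 0 < t →
      μ₁ {x | t ≤ |x j - g₁ j|} ≤ ENNReal.ofReal (2 * Real.exp (-t / Δ₂)))
    (h₂ : ∀ j, ∀ t : ℝ, 0 < t →
      μ₂ {x | t ≤ |x j - g₂ j|} ≤ ENNReal.ofReal (2 * Real.exp (-t / Δ₂))) :
    ∀ T : Set (Fin k → ℝ), MeasurableSet T →
      measConv μ₁ (Measure.pi fun _ : Fin k => laplaceMeasure (c * (Δ₁ + Δ₂) * k / ε)) T ≤
        ENNReal.ofReal (Real.exp ε) *
          measConv μ₂ (Measure.pi fun _ : Fin k => laplaceMeasure (c * (Δ₁ + Δ₂) * k / ε)) T := by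
  intro T hT
  -- basic positivity facts
  have hlog2 : (0.6931471803 : ℝ) < Real.log 2 := Real.log_two_gt_d9
  have hc11 : 11 ≤ c := by rw [hc]; linarith
  have hcpos : 0 < c := by linarith
  have hkR : (0:ℝ) < k := by exact_mod_cast hk
  have hd : 0 < Δ₁ + Δ₂ := by linarith
  set b : ℝ := c * (Δ₁ + Δ₂) * k / ε with hbdef
  have hb : 0 < b := by positivity
  set a : ℝ := (k : ℝ) / b with hadef
  have ha0 : 0 ≤ a := by positivity
  have hβ : a * Δ₁ + a * Δ₂ = ε / c := by
    rw [hadef, hbdef]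
    field_simp
  have hβpos : 0 < ε / c := by positivity
  have hβ6 : ε / c ≤ 1 / 6 := by
    rw [div_le_div_iff₀ hcpos (by norm_num : (0:ℝ) < 6)]
    linarith
  have haΔ₂ : a * Δ₂ < 1 := by nlinarith [mul_nonneg ha0 hΔ₁]
  have haΔ₂0 : 0 ≤ a * Δ₂ := by positivity
  have haΔ₁0 : 0 ≤ a * Δ₁ := by positivity
  -- the noise measure
  haveI hlp : IsProbabilityMeasure (laplaceMeasure b) := laplace_prob ⟨hb⟩
  set Λ : Measure (Fin k → ℝ) := Measure.pi fun _ : Fin k => laplaceMeasure b with hΛ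
  haveI : IsProbabilityMeasure Λ := by rw [hΛ]; infer_instance
  set K : ℝ≥0∞ := Λ {y | g₂ + y ∈ T} with hK
  have hKtop : K ≠ ⊤ := by
    rw [hK]
    exact (lt_of_le_of_lt prob_le_one ENNReal.one_lt_top).ne
  -- convolution as integral
  have conv1 : measConv μ₁ Λ T = ∫⁻ x, Λ {y | x + y ∈ T} ∂μ₁ := by
    rw [measConv, Measure.map_apply measurable_add hT, Measure.prod_apply (measurable_add hT)]
    rfl
  have conv2 : measConv μ₂ Λ T = ∫⁻ x, Λ {y | x + y ∈ T} ∂μ₂ := by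
    rw [measConv, Measure.map_apply measurable_add hT, Measure.prod_apply (measurable_add hT)]
    rfl
  set M : ℝ := 1 + 2 * (a * Δ₂) / (1 - a * Δ₂) with hM
  have hM0 : 0 ≤ M := by
    rw [hM]
    have : 0 ≤ 2 * (a * Δ₂) / (1 - a * Δ₂) := div_nonneg (by positivity) (by linarith)
    linarith
  have hfmeas1 : ∀ j : Fin k, Measurable fun x : Fin k → ℝ => |x j - g₁ j| := fun j =>
    ((measurable_pi_apply j).sub measurable_const).abs
  have hfmeas2 : ∀ j : Fin k, Measurable fun x : Fin k → ℝ => |x j - g₂ j| := fun j =>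
    ((measurable_pi_apply j).sub measurable_const).abs
  -- pointwise real bound for the μ₁ side
  have pointwise : ∀ x : Fin k → ℝ, Real.exp (∑ j, |x j - g₂ j| / b) ≤
      (Real.exp (a * Δ₁) / k) * ∑ j, Real.exp (a * |x j - g₁ j|) := by
    intro x
    have tri : ∀ j, |x j - g₂ j| ≤ |x j - g₁ j| + Δ₁ := by
      intro j
      calc |x j - g₂ j| = |(x j - g₁ j) + (g₁ j - g₂ j)| := by ring_nf
        _ ≤ |x j - g₁ j| + |g₁ j - g₂ j| := abs_add_le _ _
        _ ≤ |x j - g₁ j| + Δ₁ := by linarith [hg j]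
    have hsum1 : ∑ j, |x j - g₂ j| / b ≤ a * Δ₁ + ∑ j, |x j - g₁ j| / b := by
      have h1 : ∑ j, |x j - g₂ j| / b ≤ ∑ j, (|x j - g₁ j| + Δ₁) / b :=
        Finset.sum_le_sum fun j _ => div_le_div_of_nonneg_right (tri j) hb.le
      have h2 : ∑ j : Fin k, (|x j - g₁ j| + Δ₁) / b
          = (∑ j, |x j - g₁ j| / b) + k * (Δ₁ / b) := by
        simp_rw [add_div]
        rw [Finset.sum_add_distrib, Finset.sum_const, Finset.card_fin, nsmul_eq_mul]
      have h3 : (k : ℝ) * (Δ₁ / b) = a * Δ₁ := by rw [hadef]; ring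
      linarith
    have amgm : Real.exp (∑ j, |x j - g₁ j| / b) ≤
        (1 / k) * ∑ j, Real.exp (a * |x j - g₁ j|) := by
      have hgm := Real.geom_mean_le_arith_mean_weighted Finset.univ
        (fun _ : Fin k => 1 / (k:ℝ)) (fun j => Real.exp (a * |x j - g₁ j|))
        (fun i _ => by positivity)
        (by rw [Finset.sum_const, Finset.card_fin, nsmul_eq_mul]; field_simp)
        (fun i _ => (Real.exp_pos _).le)
      have hlhs : (∏ j, Real.exp (a * |x j - g₁ j|) ^ (1 / (k:ℝ))) =
          Real.exp (∑ j, |x j - g₁ j| / b) := by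
        simp_rw [← Real.exp_mul, ← Real.exp_sum]
        congr 1
        refine Finset.sum_congr rfl fun j _ => ?_
        rw [hadef]
        field_simp
      have hrhs : ∑ j : Fin k, (1 / (k:ℝ)) * Real.exp (a * |x j - g₁ j|) =
          (1 / k) * ∑ j, Real.exp (a * |x j - g₁ j|) := by
        rw [Finset.mul_sum]
      rw [hlhs, hrhs] at hgm
      exact hgm
    calc Real.exp (∑ j, |x j - g₂ j| / b)
        ≤ Real.exp (a * Δ₁ + ∑ j, |x j - g₁ j| / b) := Real.exp_le_exp.mpr hsum1
      _ = Real.exp (a * Δ₁) * Real.exp (∑ j, |x j - g₁ j| / b) := Real.exp_add _ _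
      _ ≤ Real.exp (a * Δ₁) * ((1 / k) * ∑ j, Real.exp (a * |x j - g₁ j|)) :=
          mul_le_mul_of_nonneg_left amgm (Real.exp_pos _).le
      _ = (Real.exp (a * Δ₁) / k) * ∑ j, Real.exp (a * |x j - g₁ j|) := by ring
  -- MGF bound
  have mgf : ∫⁻ x, ENNReal.ofReal (Real.exp (∑ j, |x j - g₂ j| / b)) ∂μ₁ ≤
      ENNReal.ofReal (Real.exp (a * Δ₁) * M) := by
    calc ∫⁻ x, ENNReal.ofReal (Real.exp (∑ j, |x j - g₂ j| / b)) ∂μ₁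
        ≤ ∫⁻ x, ENNReal.ofReal (Real.exp (a * Δ₁) / k) *
            (∑ j, ENNReal.ofReal (Real.exp (a * |x j - g₁ j|))) ∂μ₁ := by
          refine lintegral_mono fun x => ?_
          rw [← ENNReal.ofReal_sum_of_nonneg (fun j _ => (Real.exp_pos _).le),
            ← ENNReal.ofReal_mul (by positivity)]
          exact ENNReal.ofReal_le_ofReal (pointwise x)
      _ = ENNReal.ofReal (Real.exp (a * Δ₁) / k) *
            ∑ j, ∫⁻ x, ENNReal.ofReal (Real.exp (a * |x j - g₁ j|)) ∂μ₁ := by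
          rw [lintegral_const_mul' _ _ ENNReal.ofReal_ne_top,
            lintegral_finset_sum _ (fun j _ => by
              exact ((Real.measurable_exp.comp ((hfmeas1 j).const_mul a)).ennreal_ofReal))]
      _ ≤ ENNReal.ofReal (Real.exp (a * Δ₁) / k) * ∑ _j : Fin k, ENNReal.ofReal M := by
          refine mul_le_mul_right (Finset.sum_le_sum fun j _ => ?_) _
          rw [hM]
          exact tail_mgf (hfmeas1 j) (fun ω => abs_nonneg _) hΔ₂ (h₁ j) ha0 haΔ₂
      _ = ENNReal.ofReal (Real.exp (a * Δ₁) * M) := by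
          rw [Finset.sum_const, Finset.card_fin, nsmul_eq_mul,
            ← ENNReal.ofReal_natCast k, ← ENNReal.ofReal_mul (by positivity),
            ← ENNReal.ofReal_mul (by positivity)]
          congr 1
          field_simp
  -- upper bound for μ₁ side
  have upper : measConv μ₁ Λ T ≤ ENNReal.ofReal (Real.exp (a * Δ₁) * M) * K := by
    rw [conv1]
    calc ∫⁻ x, Λ {y | x + y ∈ T} ∂μ₁
        ≤ ∫⁻ x, ENNReal.ofReal (Real.exp (∑ j, |x j - g₂ j| / b)) * K ∂μ₁ :=
          lintegral_mono fun x => shift_bound hb hT x g₂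
      _ = (∫⁻ x, ENNReal.ofReal (Real.exp (∑ j, |x j - g₂ j| / b)) ∂μ₁) * K :=
          lintegral_mul_const' _ _ hKtop
      _ ≤ ENNReal.ofReal (Real.exp (a * Δ₁) * M) * K := mul_le_mul_left mgf _
  -- lower bound for μ₂ side
  have meanS : ∫⁻ y, ENNReal.ofReal (∑ j, |y j - g₂ j| / b) ∂μ₂ ≤
      ENNReal.ofReal (2 * (a * Δ₂)) := by
    calc ∫⁻ y, ENNReal.ofReal (∑ j, |y j - g₂ j| / b) ∂μ₂
        = ∑ j, ∫⁻ y, ENNReal.ofReal (|y j - g₂ j| / b) ∂μ₂ := by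
          rw [lintegral_congr (fun y => ENNReal.ofReal_sum_of_nonneg
            (fun j _ => by positivity))]
          exact lintegral_finset_sum _ (fun j _ =>
            (((hfmeas2 j).div_const b).ennreal_ofReal))
      _ ≤ ∑ _j : Fin k, ENNReal.ofReal (1 / b) * ENNReal.ofReal (2 * Δ₂) := by
          refine Finset.sum_le_sum fun j _ => ?_
          have : ∀ y : Fin k → ℝ, ENNReal.ofReal (|y j - g₂ j| / b) =
              ENNReal.ofReal (1 / b) * ENNReal.ofReal (|y j - g₂ j|) := by
            intro y
            rw [← ENNReal.ofReal_mul (by positivity)]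
            congr 1
            field_simp
          simp_rw [this]
          rw [lintegral_const_mul' _ _ ENNReal.ofReal_ne_top]
          exact mul_le_mul_right (tail_mean (hfmeas2 j) (fun ω => abs_nonneg _) hΔ₂ (h₂ j)) _
      _ = ENNReal.ofReal (2 * (a * Δ₂)) := by
          rw [Finset.sum_const, Finset.card_fin, nsmul_eq_mul,
            ← ENNReal.ofReal_mul (by positivity), ← ENNReal.ofReal_natCast k,
            ← ENNReal.ofReal_mul (by positivity)]
          congr 1
          rw [hadef]
          field_simp
  have intlow : 1 - ENNReal.ofReal (2 * (a * Δ₂)) ≤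
      ∫⁻ y, ENNReal.ofReal (Real.exp (-(∑ j, |y j - g₂ j| / b))) ∂μ₂ := by
    have hSm : Measurable fun y : Fin k → ℝ => ENNReal.ofReal (∑ j, |y j - g₂ j| / b) :=
      (Finset.measurable_sum _ fun j _ => (hfmeas2 j).div_const b).ennreal_ofReal
    calc 1 - ENNReal.ofReal (2 * (a * Δ₂))
        ≤ 1 - ∫⁻ y, ENNReal.ofReal (∑ j, |y j - g₂ j| / b) ∂μ₂ := tsub_le_tsub_left meanS 1
      _ = (∫⁻ _y, (1:ℝ≥0∞) ∂μ₂) - ∫⁻ y, ENNReal.ofReal (∑ j, |y j - g₂ j| / b) ∂μ₂ := by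
          rw [lintegral_one, measure_univ]
      _ ≤ ∫⁻ y, 1 - ENNReal.ofReal (∑ j, |y j - g₂ j| / b) ∂μ₂ := lintegral_sub_le _ _ hSm
      _ ≤ ∫⁻ y, ENNReal.ofReal (Real.exp (-(∑ j, |y j - g₂ j| / b))) ∂μ₂ := by
          refine lintegral_mono fun y => ?_
          rw [← ENNReal.ofReal_one, ← ENNReal.ofReal_sub _ (by positivity)]
          apply ENNReal.ofReal_le_ofReal
          have := Real.add_one_le_exp (-(∑ j, |y j - g₂ j| / b))
          linarith
  have lower : ENNReal.ofReal (1 - 2 * (a * Δ₂)) * K ≤ measConv μ₂ Λ T := by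
    rw [conv2]
    have pl : ∀ y : Fin k → ℝ,
        ENNReal.ofReal (Real.exp (-(∑ j, |y j - g₂ j| / b))) * K ≤ Λ {z | y + z ∈ T} := by
      intro y
      have sb := shift_bound hb hT g₂ y
      have habs : (∑ j, |g₂ j - y j| / b) = ∑ j, |y j - g₂ j| / b := by
        refine Finset.sum_congr rfl fun j _ => ?_
        rw [abs_sub_comm]
      rw [habs] at sb
      calc ENNReal.ofReal (Real.exp (-(∑ j, |y j - g₂ j| / b))) * K
          ≤ ENNReal.ofReal (Real.exp (-(∑ j, |y j - g₂ j| / b))) *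
              (ENNReal.ofReal (Real.exp (∑ j, |y j - g₂ j| / b)) * Λ {z | y + z ∈ T}) :=
            mul_le_mul_right sb _
        _ = Λ {z | y + z ∈ T} := by
            rw [← mul_assoc, ← ENNReal.ofReal_mul (Real.exp_pos _).le, ← Real.exp_add,
              neg_add_cancel, Real.exp_zero, ENNReal.ofReal_one, one_mul]
    calc ENNReal.ofReal (1 - 2 * (a * Δ₂)) * K
        ≤ (1 - ENNReal.ofReal (2 * (a * Δ₂))) * K := by
          refine mul_le_mul_left ?_ _
          rw [← ENNReal.ofReal_one, ← ENNReal.ofReal_sub _ (by positivity)]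
      _ ≤ (∫⁻ y, ENNReal.ofReal (Real.exp (-(∑ j, |y j - g₂ j| / b))) ∂μ₂) * K :=
          mul_le_mul_left intlow _
      _ = ∫⁻ y, ENNReal.ofReal (Real.exp (-(∑ j, |y j - g₂ j| / b))) * K ∂μ₂ :=
          (lintegral_mul_const' _ _ hKtop).symm
      _ ≤ ∫⁻ y, Λ {z | y + z ∈ T} ∂μ₂ := lintegral_mono pl
  -- combine
  have keyreal : Real.exp (a * Δ₁) * M ≤ Real.exp ε * (1 - 2 * (a * Δ₂)) := by
    rw [hM]
    exact final_real haΔ₁0 haΔ₂0 hβ hβpos hβ6 hc11 (by field_simp)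
  calc measConv μ₁ Λ T
      ≤ ENNReal.ofReal (Real.exp (a * Δ₁) * M) * K := upper
    _ ≤ ENNReal.ofReal (Real.exp ε * (1 - 2 * (a * Δ₂))) * K :=
        mul_le_mul_left (ENNReal.ofReal_le_ofReal keyreal) _
    _ = ENNReal.ofReal (Real.exp ε) * (ENNReal.ofReal (1 - 2 * (a * Δ₂)) * K) := by
        rw [ENNReal.ofReal_mul (Real.exp_pos _).le, mul_assoc]
    _ ≤ ENNReal.ofReal (Real.exp ε) * measConv μ₂ Λ T := mul_le_mul_right lower _
end

section
/- For every α > 1, every b with 0 ≤ b ≤ 1, it holds that (1 − (1 − 2^{−1/α})·b)^{−α} ≤ 1 + b. -/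
open Real

lemma convexOn_rpow_of_nonpos' {p : ℝ} (hp : p ≤ 0) :
    ConvexOn ℝ (Set.Ioi (0:ℝ)) fun x : ℝ => x ^ p := by
  have hD : Convex ℝ (Set.Ioi (0:ℝ)) := convex_Ioi 0
  refine convexOn_of_hasDerivWithinAt2_nonneg hD
    (f' := fun x => p * x ^ (p - 1)) (f'' := fun x => p * ((p-1) * x ^ (p - 1 - 1))) ?_ ?_ ?_ ?_
  · exact fun x hx =>
      (Real.continuousAt_rpow_const x p (Or.inl (ne_of_gt hx))).continuousWithinAt
  · intro x hx
    rw [interior_Ioi] at hx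
    exact (Real.hasDerivAt_rpow_const (Or.inl (ne_of_gt hx))).hasDerivWithinAt
  · intro x hx
    rw [interior_Ioi] at hx
    exact ((Real.hasDerivAt_rpow_const (p := p - 1)
      (Or.inl (ne_of_gt hx))).const_mul p).hasDerivWithinAt
  · intro x hx
    rw [interior_Ioi] at hx
    have h1 : (0:ℝ) ≤ x ^ (p - 1 - 1) := Real.rpow_nonneg (le_of_lt hx) _
    have h2 : (0:ℝ) ≤ p * (p - 1) := by nlinarith
    nlinarith [mul_nonneg h2 h1]

/-- Key pointwise inequality for the zero-symmetric Pareto mechanism: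
`(1 - (1 - 2^{-1/α}) b)^{-α} ≤ 1 + b` for `α > 1` and `0 ≤ b ≤ 1`. -/
theorem stmt_9 (α : ℝ) (hα : 1 < α) (b : ℝ) (hb0 : 0 ≤ b) (hb1 : b ≤ 1) :
    (1 - (1 - (2 : ℝ) ^ (-1 / α)) * b) ^ (-α) ≤ 1 + b := by
  have hα0 : (0:ℝ) < α := lt_trans one_pos hα
  set p : ℝ := -1 / α with hp
  have hp0 : p ≤ 0 := by
    rw [hp]
    apply div_nonpos_of_nonpos_of_nonneg <;> linarith
  have h2p_pos : (0:ℝ) < (2:ℝ) ^ p := Real.rpow_pos_of_pos two_pos p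
  have h2p_le : (2:ℝ) ^ p ≤ 1 := Real.rpow_le_one_of_one_le_of_nonpos one_le_two hp0
  -- convexity gives the key inequality
  have hconv := (convexOn_rpow_of_nonpos' hp0).2
    (show (1:ℝ) ∈ Set.Ioi (0:ℝ) by norm_num) (show (2:ℝ) ∈ Set.Ioi (0:ℝ) by norm_num)
    (show (0:ℝ) ≤ 1 - b by linarith) hb0 (show (1 - b) + b = 1 by ring)
  have hkey : (1 + b) ^ p ≤ 1 - (1 - (2:ℝ) ^ p) * b := by
    have h1 : (1 - b) • (1:ℝ) + b • (2:ℝ) = 1 + b := by simp [smul_eq_mul]; ring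
    rw [h1] at hconv
    calc (1 + b) ^ p ≤ (1 - b) • (1:ℝ) ^ p + b • (2:ℝ) ^ p := hconv
      _ = 1 - (1 - (2:ℝ) ^ p) * b := by
          rw [Real.one_rpow]; simp [smul_eq_mul]; ring
  have hpos : (0:ℝ) < 1 - (1 - (2:ℝ) ^ p) * b := by nlinarith
  have h1b : (0:ℝ) < (1 + b) ^ p := Real.rpow_pos_of_pos (by linarith) p
  have := Real.rpow_le_rpow_of_nonpos h1b hkey (by linarith : -α ≤ 0)
  calc (1 - (1 - (2:ℝ) ^ p) * b) ^ (-α) ≤ ((1 + b) ^ p) ^ (-α) := this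
    _ = (1 + b) ^ (p * (-α)) := (Real.rpow_mul (by linarith) p (-α)).symm
    _ = 1 + b := by
        have : p * (-α) = 1 := by
          rw [hp]; field_simp
        rw [this, Real.rpow_one]
end

section
/- Let α > 1, 0 < ε < 1, x ≥ 0, and let u satisfy 0 ≤ u ≤ 1 − ε/(1+x)^α. Then |1 − (1 − 2^{−1/α})·ε / ((1+x)·(1−u)^{1/α})|^{−α} ≤ 1 + ε/(1−u)^{1/α}. -/
open Real

set_option maxHeartbeats 1000000 in
/-- Pointwise inequality: for `α > 1`, `0 < ε < 1`, `x ≥ 0` and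
`0 ≤ u ≤ 1 - ε/(1+x)^α`, it holds
`|1 - (1 - 2^{-1/α}) ε / ((1+x)(1-u)^{1/α})|^{-α} ≤ 1 + ε/(1-u)^{1/α}`. -/
theorem stmt_10 (α : ℝ) (hα : 1 < α) (ε : ℝ) (hε0 : 0 < ε) (hε1 : ε < 1)
    (x : ℝ) (hx : 0 ≤ x) (u : ℝ) (hu0 : 0 ≤ u) (hu1 : u ≤ 1 - ε / (1 + x) ^ α) :
    |1 - (1 - (2 : ℝ) ^ (-1 / α)) * ε / ((1 + x) * (1 - u) ^ (1 / α))| ^ (-α) ≤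
      1 + ε / (1 - u) ^ (1 / α) := by
  have hα0 : 0 < α := by linarith
  have h1x : (0:ℝ) < 1 + x := by linarith
  have hpow : (0:ℝ) < (1 + x) ^ α := rpow_pos_of_pos h1x α
  have h1u : 0 < 1 - u := lt_of_lt_of_le (div_pos hε0 hpow) (by linarith)
  set A : ℝ := (1 - u) ^ (1 / α) with hAdef
  have hA : 0 < A := rpow_pos_of_pos h1u _
  set t : ℝ := ε / ((1 + x) * A) with htdef
  have ht0 : 0 < t := div_pos hε0 (mul_pos h1x hA)
  -- t ≤ 1
  have hAge : ε ^ (1/α) / (1 + x) ≤ A := by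
    have h1 : ε / (1 + x) ^ α ≤ 1 - u := by linarith
    have h2 : (ε / (1 + x) ^ α) ^ (1/α) ≤ A :=
      rpow_le_rpow (le_of_lt (div_pos hε0 hpow)) h1 (by positivity)
    have h3 : (ε / (1 + x) ^ α) ^ (1/α) = ε ^ (1/α) / (1 + x) := by
      rw [div_rpow hε0.le hpow.le, ← rpow_mul h1x.le, mul_one_div,
        div_self (ne_of_gt hα0), rpow_one]
    rwa [h3] at h2
  have htle : t ≤ 1 := by
    rw [div_le_one (mul_pos h1x hA)]
    have h4 : ε ^ (1/α) ≤ (1 + x) * A := by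
      have := mul_le_mul_of_nonneg_left hAge h1x.le
      rwa [mul_div_cancel₀ _ (ne_of_gt h1x)] at this
    have h5 : ε ≤ ε ^ (1/α) := by
      nth_rewrite 1 [← rpow_one ε]
      exact rpow_le_rpow_of_exponent_ge hε0 hε1.le
        (by rw [div_le_one hα0]; linarith)
    linarith
  set d : ℝ := (2:ℝ) ^ (1/α) - 1 with hddef
  set c : ℝ := 1 - (2:ℝ) ^ (-1/α) with hcdef
  have h2pos : (0:ℝ) < (2:ℝ) ^ (1/α) := rpow_pos_of_pos two_pos _
  have h21 : (1:ℝ) < (2:ℝ) ^ (1/α) :=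
    one_lt_rpow_iff_of_pos two_pos |>.2 (Or.inl ⟨one_lt_two, by positivity⟩)
  have hd0 : 0 < d := by rw [hddef]; linarith
  have hcd : c * (1 + d) = d := by
    have hinv : (2:ℝ) ^ (-1/α) * (2:ℝ) ^ (1/α) = 1 := by
      rw [← rpow_add two_pos, show -1/α + 1/α = 0 by ring, rpow_zero]
    have h1pd : (1 + d) = (2:ℝ) ^ (1/α) := by rw [hddef]; ring
    rw [h1pd, hcdef, sub_mul, one_mul, hinv, hddef]
  have h2lt1 : (2:ℝ) ^ (-1/α) < 1 := by
    apply rpow_lt_one_of_one_lt_of_neg one_lt_two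
    rw [neg_div]; exact neg_neg_of_pos (by positivity)
  have hc0 : 0 < c := by rw [hcdef]; linarith
  have hc1 : c < 1 := by
    have : (0:ℝ) < (2:ℝ) ^ (-1/α) := rpow_pos_of_pos two_pos _
    rw [hcdef]; linarith
  -- concavity : 1 + t*d ≤ (1+t)^(1/α)
  have hconc : 1 + t * d ≤ (1 + t) ^ (1/α) := by
    have hcc := (Real.concaveOn_rpow (p := 1/α) (by positivity)
      (by rw [div_le_one hα0]; linarith)).2
      (Set.mem_Ici.2 (zero_le_one)) (Set.mem_Ici.2 (by norm_num : (0:ℝ) ≤ 2))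
      (by linarith : (0:ℝ) ≤ 1 - t) ht0.le (by ring)
    simp only [smul_eq_mul] at hcc
    have h1p : (1:ℝ) ^ (1/α) = 1 := one_rpow _
    have heq : (1 - t) * (1:ℝ) + t * 2 = 1 + t := by ring
    rw [heq, h1p] at hcc
    calc 1 + t * d = (1 - t) * 1 + t * ((2:ℝ)^(1/α)) := by rw [hddef]; ring
    _ ≤ (1 + t) ^ (1/α) := hcc
  -- key : (1+t)^(-1/α) ≤ 1 - c*t
  have h1td : (0:ℝ) < 1 + t * d := by nlinarith
  have hkey : (1 + t) ^ (-(1/α)) ≤ 1 - c * t := by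
    rw [rpow_neg (by linarith : (0:ℝ) ≤ 1 + t)]
    have hstep1 : ((1 + t) ^ (1/α))⁻¹ ≤ (1 + t * d)⁻¹ :=
      inv_anti₀ h1td hconc
    have hstep2 : (1 + t * d)⁻¹ ≤ 1 - c * t := by
      rw [inv_le_iff_one_le_mul₀ h1td]
      nlinarith [mul_nonneg (mul_nonneg hc0.le hd0.le)
        (mul_nonneg ht0.le (by linarith : (0:ℝ) ≤ 1 - t))]
    linarith
  have hct : 1 - c * t ≥ 1 - c := by nlinarith
  have hctpos : 0 < 1 - c * t := by linarith
  -- rewrite goal in terms of t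
  have hrw : 1 - (1 - (2:ℝ) ^ (-1/α)) * ε / ((1 + x) * A) = 1 - c * t := by
    rw [hcdef, htdef]; ring
  rw [hrw, abs_of_pos hctpos]
  -- (1 - c t)^(-α) ≤ 1 + t
  have hmain : (1 - c * t) ^ (-α) ≤ 1 + t := by
    have h1 : (1 - c * t) ^ (-α) ≤ ((1 + t) ^ (-(1/α))) ^ (-α) := by
      apply rpow_le_rpow_of_nonpos (rpow_pos_of_pos (by linarith) _) hkey
      linarith
    have h2 : ((1 + t) ^ (-(1/α))) ^ (-α) = 1 + t := by
      rw [← rpow_mul (by linarith : (0:ℝ) ≤ 1 + t),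
        show -(1/α) * -α = 1/α * α by ring, one_div,
        inv_mul_cancel₀ (ne_of_gt hα0), rpow_one]
    linarith [h2.le, h2.ge]
  have hfin : t ≤ ε / A := by
    rw [htdef, div_le_div_iff₀ (mul_pos h1x hA) hA]
    nlinarith [mul_nonneg (mul_nonneg hε0.le hx) hA.le]
  linarith
end

section
/- For every ε with 0 ≤ ε ≤ 1, every α > 1, and every x ≥ 0, it holds that ∫₀¹ min( (1+x)^α , |1 − (1 − 2^{−1/α})·ε / ((1+x)·(1−u)^{1/α})|^{−α} ) du ≤ 1 + ((2α − 1)/(α − 1))·ε. -/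
open Real Set MeasureTheory intervalIntegral

/-- `y ↦ y ^ (-p)` is convex on `(0, ∞)` for `1 ≤ p`. -/
lemma my_convexOn_rpow_neg {p : ℝ} (hp : 1 ≤ p) :
    ConvexOn ℝ (Set.Ioi (0 : ℝ)) (fun y : ℝ => y ^ (-p)) := by
  have himg : (fun y : ℝ => y⁻¹) '' Set.Ioi 0 = Set.Ioi (0 : ℝ) := by
    ext y
    constructor
    · rintro ⟨z, hz, rfl⟩
      exact inv_pos.mpr (Set.mem_Ioi.mp hz)
    · intro hy
      exact ⟨y⁻¹, inv_pos.mpr (Set.mem_Ioi.mp hy), inv_inv y⟩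
  have hinv : ConvexOn ℝ (Set.Ioi (0 : ℝ)) (fun y : ℝ => y⁻¹) := by
    have h := (strictConvexOn_zpow (m := -1) (by decide) (by decide)).convexOn
    refine h.congr fun y _ => ?_
    simp [zpow_neg_one]
  have hg : ConvexOn ℝ ((fun y : ℝ => y⁻¹) '' Set.Ioi 0) (fun t : ℝ => t ^ p) := by
    rw [himg]
    exact (convexOn_rpow hp).subset Set.Ioi_subset_Ici_self (convex_Ioi 0)
  have hmono : MonotoneOn (fun t : ℝ => t ^ p) ((fun y : ℝ => y⁻¹) '' Set.Ioi 0) := by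
    rw [himg]
    intro a ha b _ hab
    exact Real.rpow_le_rpow (le_of_lt (Set.mem_Ioi.mp ha)) hab (by linarith)
  refine (hg.comp hinv hmono).congr fun y hy => ?_
  have hy0 : 0 < y := Set.mem_Ioi.mp hy
  simp only [Function.comp]
  rw [Real.inv_rpow hy0.le, ← Real.rpow_neg hy0.le]

/-- Chord bound: for `0 ≤ s ≤ 1 - 2^{-1/α}`, `(1-s)^{-α} ≤ 1 + s/(1 - 2^{-1/α})`. -/
lemma my_key_chord {α : ℝ} (hα : 1 < α) {s : ℝ} (h0 : 0 ≤ s)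
    (h1 : s ≤ 1 - (2 : ℝ) ^ (-1 / α)) :
    (1 - s) ^ (-α) ≤ 1 + s / (1 - (2 : ℝ) ^ (-1 / α)) := by
  have hαpos : (0 : ℝ) < α := by linarith
  set a : ℝ := (2 : ℝ) ^ (-1 / α) with ha
  have hapos : 0 < a := Real.rpow_pos_of_pos two_pos _
  have halt1 : a < 1 := by
    apply Real.rpow_lt_one_of_one_lt_of_neg one_lt_two
    exact div_neg_of_neg_of_pos (by norm_num) hαpos
  have hs0pos : 0 < 1 - a := by linarith
  set lam : ℝ := s / (1 - a) with hlam
  have hlam0 : 0 ≤ lam := div_nonneg h0 hs0pos.le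
  have hlam1 : lam ≤ 1 := (div_le_one hs0pos).mpr h1
  have hconv := my_convexOn_rpow_neg hα.le
  have h2 := hconv.2 (Set.mem_Ioi.mpr hapos) (Set.mem_Ioi.mpr one_pos)
    hlam0 (by linarith : (0:ℝ) ≤ 1 - lam) (by ring)
  have hpt : lam • a + (1 - lam) • (1 : ℝ) = 1 - s := by
    simp only [smul_eq_mul, mul_one]
    have : lam * (1 - a) = s := div_mul_cancel₀ s hs0pos.ne'
    nlinarith [this]
  have haα : a ^ (-α) = 2 := by
    rw [ha, ← Real.rpow_mul (by norm_num : (0:ℝ) ≤ 2)]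
    have : -1 / α * -α = 1 := by field_simp
    rw [this, Real.rpow_one]
  rw [hpt] at h2
  calc (1 - s) ^ (-α) ≤ lam • a ^ (-α) + (1 - lam) • (1 : ℝ) ^ (-α) := h2
    _ = 1 + lam := by
        rw [haα, Real.one_rpow]
        simp only [smul_eq_mul, mul_one]
        ring
    _ = 1 + s / (1 - a) := by rw [hlam]

/-- The integral inequality at the technical core of the privacy proof of the
zero-symmetric Pareto mechanism. -/
theorem stmt_11 (ε : ℝ) (hε0 : 0 ≤ ε) (hε1 : ε ≤ 1) (α : ℝ) (hα : 1 < α)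
    (x : ℝ) (hx : 0 ≤ x) :
    ∫ u in (0 : ℝ)..1,
        min ((1 + x) ^ α)
          (|1 - (1 - (2 : ℝ) ^ (-1 / α)) * ε / ((1 + x) * (1 - u) ^ (1 / α))| ^ (-α)) ≤
      1 + (2 * α - 1) / (α - 1) * ε := by
  have hαpos : (0 : ℝ) < α := by linarith
  have hαne : α ≠ 0 := ne_of_gt hαpos
  have hα1 : (0 : ℝ) < α - 1 := by linarith
  have hx1 : (0 : ℝ) < 1 + x := by linarith
  have hx1' : (1 : ℝ) ≤ 1 + x := by linarith
  have hM1 : (1 : ℝ) ≤ (1 + x) ^ α := Real.one_le_rpow hx1' hαpos.le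
  have hapos : (0 : ℝ) < (2 : ℝ) ^ (-1 / α) := Real.rpow_pos_of_pos two_pos _
  have ha1 : (2 : ℝ) ^ (-1 / α) < 1 := by
    apply Real.rpow_lt_one_of_one_lt_of_neg one_lt_two
    exact div_neg_of_neg_of_pos (by norm_num) hαpos
  set s0 : ℝ := 1 - (2 : ℝ) ^ (-1 / α) with hs0def
  have hs0pos : 0 < s0 := by rw [hs0def]; linarith
  have hs0lt1 : s0 < 1 := by rw [hs0def]; linarith
  set M : ℝ := (1 + x) ^ α with hMdef
  have hMpos : 0 < M := lt_of_lt_of_le one_pos hM1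
  set f : ℝ → ℝ :=
    fun u => min M (|1 - s0 * ε / ((1 + x) * (1 - u) ^ (1 / α))| ^ (-α)) with hfdef
  have hfnn : ∀ u, 0 ≤ f u :=
    fun u => le_min hMpos.le (Real.rpow_nonneg (abs_nonneg _) _)
  have hfleM : ∀ u, f u ≤ M := fun u => min_le_left _ _
  have hmeas : Measurable f := by
    rw [hfdef]
    fun_prop
  have hfint : ∀ a b : ℝ, IntervalIntegrable f volume a b := by
    intro a b
    apply IntervalIntegrable.mono_fun' (g := fun _ => M) intervalIntegrable_const
      hmeas.aestronglyMeasurable.restrict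
    filter_upwards with u
    rw [Real.norm_eq_abs, abs_of_nonneg (hfnn u)]
    exact hfleM u
  -- the case ε = 0
  rcases eq_or_lt_of_le hε0 with hε | hεpos
  · rw [← hε]
    have hfone : f = fun _ : ℝ => (1 : ℝ) := by
      funext u
      rw [hfdef]
      simp only [← hε, mul_zero, zero_div, sub_zero, abs_one, Real.one_rpow]
      exact min_eq_right hM1
    rw [hfone]
    simp
  -- main case : ε > 0
  set T : ℝ := ε / (1 + x) with hTdef
  have hTpos : 0 < T := div_pos hεpos hx1
  have hTε : T ≤ ε := div_le_self hε0 hx1'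
  have hT1 : T ≤ 1 := hTε.trans hε1
  have hTα0 : 0 ≤ T ^ α := Real.rpow_nonneg hTpos.le _
  have hTα1 : T ^ α ≤ 1 := Real.rpow_le_one hTpos.le hT1 hαpos.le
  set b : ℝ := 1 - T ^ α with hbdef
  have hb0 : 0 ≤ b := by rw [hbdef]; linarith
  have hb1 : b ≤ 1 := by rw [hbdef]; linarith
  -- the bound function on [0, b]
  set g : ℝ → ℝ := fun u => 1 + T * (1 - u) ^ (-(1 / α)) with hgdef
  have hr : (-1 : ℝ) < -(1 / α) := by
    rw [neg_lt_neg_iff]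
    exact (div_lt_one hαpos).mpr hα
  have hgint : IntervalIntegrable g volume 0 b := by
    apply IntervalIntegrable.add intervalIntegrable_const
    apply IntervalIntegrable.const_mul
    have h := (intervalIntegral.intervalIntegrable_rpow' (a := 1) (b := 1 - b)
      (r := -(1 / α)) hr).comp_sub_left 1
    simpa using h
  -- pointwise bound on [0, b]
  have hpt : ∀ u ∈ Icc (0 : ℝ) b, f u ≤ g u := by
    intro u hu
    obtain ⟨hu0, hub⟩ := hu
    have h1u : T ^ α ≤ 1 - u := by rw [hbdef] at hub; linarith
    have h1u0 : 0 < 1 - u := lt_of_lt_of_le (Real.rpow_pos_of_pos hTpos α) h1u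
    rw [hfdef, hgdef]
    simp only
    set t : ℝ := (1 - u) ^ (1 / α) with htdef
    have htT : T ≤ t := by
      have h1 : (T ^ α) ^ (1 / α) ≤ t := by
        rw [htdef]
        exact Real.rpow_le_rpow hTα0 h1u (by positivity)
      rwa [← Real.rpow_mul hTpos.le, mul_one_div_cancel hαne, Real.rpow_one] at h1
    have htpos : 0 < t := lt_of_lt_of_le hTpos htT
    have hden : 0 < (1 + x) * t := by positivity
    have hxt : ε ≤ (1 + x) * t := by
      have h1 : (1 + x) * T = ε := by rw [hTdef]; field_simp
      nlinarith
    set s : ℝ := s0 * ε / ((1 + x) * t) with hsdef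
    have hs0' : 0 ≤ s := by
      rw [hsdef]; positivity
    have hss0 : s ≤ s0 := by
      rw [hsdef, div_le_iff₀ hden]
      calc s0 * ε ≤ s0 * ((1 + x) * t) := mul_le_mul_of_nonneg_left hxt hs0pos.le
        _ = s0 * ((1 + x) * t) := rfl
    have hs1 : s < 1 := lt_of_le_of_lt hss0 hs0lt1
    have habs : |1 - s| = 1 - s := abs_of_nonneg (by linarith)
    calc min M (|1 - s| ^ (-α)) ≤ |1 - s| ^ (-α) := min_le_right _ _
      _ = (1 - s) ^ (-α) := by rw [habs]
      _ ≤ 1 + s / s0 := by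
          rw [hs0def] at hss0 ⊢
          exact my_key_chord hα hs0' hss0
      _ = 1 + T * (1 - u) ^ (-(1 / α)) := by
          rw [Real.rpow_neg h1u0.le, ← htdef, hsdef, hTdef]
          field_simp
  -- second part : integral over [b, 1]
  have hεα : ε ^ α ≤ ε := by
    calc ε ^ α ≤ ε ^ (1 : ℝ) :=
          Real.rpow_le_rpow_of_exponent_ge hεpos hε1 (by linarith)
      _ = ε := Real.rpow_one ε
  have hpart2 : ∫ u in b..1, f u ≤ ε := by
    have h1 : ∫ u in b..1, f u ≤ ∫ u in b..1, (fun _ => M) u :=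
      intervalIntegral.integral_mono_on hb1 (hfint b 1) intervalIntegrable_const
        (fun u _ => hfleM u)
    rw [intervalIntegral.integral_const, smul_eq_mul] at h1
    have h2 : (1 - b) * M = ε ^ α := by
      have hb' : (1 - b) = T ^ α := by rw [hbdef]; ring
      rw [hb', hMdef, ← Real.mul_rpow hTpos.le hx1.le]
      congr 1
      rw [hTdef]
      field_simp
    linarith [hεα]
  -- first part : integral over [0, b]
  have hA : (0 : ℝ) < α / (α - 1) := by positivity
  have hpart1 : ∫ u in (0 : ℝ)..b, f u ≤ 1 + ε * (α / (α - 1)) := by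
    have hmono1 : ∫ u in (0 : ℝ)..b, f u ≤ ∫ u in (0 : ℝ)..b, g u :=
      intervalIntegral.integral_mono_on hb0 (hfint 0 b) hgint hpt
    have hintrp : IntervalIntegrable (fun u : ℝ => (1 - u) ^ (-(1 / α))) volume 0 b := by
      have h := (intervalIntegral.intervalIntegrable_rpow' (a := 1) (b := 1 - b)
        (r := -(1 / α)) hr).comp_sub_left 1
      simpa using h
    have hsplitg : ∫ u in (0 : ℝ)..b, g u
        = b + T * ∫ u in (0 : ℝ)..b, (1 - u) ^ (-(1 / α)) := by
      rw [hgdef]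
      rw [intervalIntegral.integral_add intervalIntegrable_const (hintrp.const_mul T),
        intervalIntegral.integral_const, intervalIntegral.integral_const_mul]
      simp
    have hJ : ∫ u in (0 : ℝ)..b, (1 - u) ^ (-(1 / α))
        = ∫ x in (1 - b)..1, x ^ (-(1 / α)) := by
      have h := intervalIntegral.integral_comp_sub_left
        (a := 0) (b := b) (fun x : ℝ => x ^ (-(1 / α))) 1
      simpa using h
    have hJval : ∫ x in (1 - b)..1, x ^ (-(1 / α))
        = ((1 : ℝ) ^ (-(1 / α) + 1) - (1 - b) ^ (-(1 / α) + 1)) / (-(1 / α) + 1) :=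
      integral_rpow (Or.inl hr)
    have hd : (0 : ℝ) < -(1 / α) + 1 := by
      have : (1 : ℝ) / α < 1 := (div_lt_one hαpos).mpr hα
      linarith
    have hz0 : 0 ≤ (1 - b) ^ (-(1 / α) + 1) := by
      apply Real.rpow_nonneg
      rw [hbdef]; linarith
    have hJle : ∫ u in (0 : ℝ)..b, (1 - u) ^ (-(1 / α)) ≤ α / (α - 1) := by
      rw [hJ, hJval, Real.one_rpow]
      calc (1 - (1 - b) ^ (-(1 / α) + 1)) / (-(1 / α) + 1)
          ≤ 1 / (-(1 / α) + 1) := by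
            gcongr
            linarith
        _ = α / (α - 1) := by
            rw [div_eq_div_iff (by linarith) (by linarith)]
            field_simp
            ring
    have hJ0 : 0 ≤ ∫ u in (0 : ℝ)..b, (1 - u) ^ (-(1 / α)) := by
      rw [hJ, hJval, Real.one_rpow]
      apply div_nonneg _ hd.le
      have : (1 - b) ^ (-(1 / α) + 1) ≤ 1 := by
        apply Real.rpow_le_one _ _ hd.le
        · rw [hbdef]; linarith
        · rw [hbdef]; linarith
      linarith
    calc ∫ u in (0 : ℝ)..b, f u ≤ ∫ u in (0 : ℝ)..b, g u := hmono1
      _ = b + T * ∫ u in (0 : ℝ)..b, (1 - u) ^ (-(1 / α)) := hsplitg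
      _ ≤ 1 + ε * (α / (α - 1)) := by
          have hTJ : T * ∫ u in (0 : ℝ)..b, (1 - u) ^ (-(1 / α)) ≤ ε * (α / (α - 1)) :=
            mul_le_mul hTε hJle hJ0 hε0
          linarith
  -- combine
  have hsplit : ∫ u in (0 : ℝ)..1, f u
      = (∫ u in (0 : ℝ)..b, f u) + ∫ u in b..1, f u :=
    (intervalIntegral.integral_add_adjacent_intervals (hfint 0 b) (hfint b 1)).symm
  have hcoef : (2 * α - 1) / (α - 1) = α / (α - 1) + 1 := by
    field_simp
    ring
  calc ∫ u in (0 : ℝ)..1, f u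
      = (∫ u in (0 : ℝ)..b, f u) + ∫ u in b..1, f u := hsplit
    _ ≤ (1 + ε * (α / (α - 1))) + ε := add_le_add hpart1 hpart2
    _ = 1 + (α / (α - 1) + 1) * ε := by ring
    _ = 1 + (2 * α - 1) / (α - 1) * ε := by rw [hcoef]
end

section
/- Let α > 1, Δ > 0 and 0 < ε ≤ 1, and set s = Δ / ((1 − 2^{−1/α})·ε). Let X be a real random variable with E[|X|^α] ≤ Δ^α. Then for every y ∈ ℝ: E[(|y − X|/s + 1)^{−α}] ≥ exp(−(1 − 2^{−1/α})·α·ε) · (|y|/s + 1)^{−α}. -/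
open MeasureTheory Real

/-- Lower bound on the density ratio `f_{X+Y}(y)/f_Y(y)` of the zero-symmetric Pareto
mechanism: if `E[|X|^α] ≤ Δ^α` and `s = Δ/((1 - 2^{-1/α}) ε)`, then
`E[(|y - X|/s + 1)^{-α}] ≥ exp(-(1 - 2^{-1/α}) α ε) (|y|/s + 1)^{-α}`. -/
theorem stmt_14 {Ω : Type*} [MeasurableSpace Ω] (μ : Measure Ω) [IsProbabilityMeasure μ]
    (X : Ω → ℝ) (hX : Measurable X) (α Δ ε : ℝ) (hα : 1 < α) (hΔ : 0 < Δ)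
    (hε0 : 0 < ε) (hε1 : ε ≤ 1) (s : ℝ) (hs : s = Δ / ((1 - (2 : ℝ) ^ (-1 / α)) * ε))
    (hmom : ∫⁻ ω, ENNReal.ofReal (|X ω| ^ α) ∂μ ≤ ENNReal.ofReal (Δ ^ α)) :
    ∀ y : ℝ,
      Real.exp (-(1 - (2 : ℝ) ^ (-1 / α)) * α * ε) * (|y| / s + 1) ^ (-α) ≤
        ∫ ω, (|y - X ω| / s + 1) ^ (-α) ∂μ := by
  intro y
  have hα0 : (0:ℝ) < α := by linarith
  have h2 : (0:ℝ) < (2:ℝ) ^ (-1 / α) := rpow_pos_of_pos two_pos _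
  have h2' : (2:ℝ) ^ (-1 / α) < 1 :=
    rpow_lt_one_of_one_lt_of_neg one_lt_two (by rw [neg_div]; exact neg_neg_iff_pos.mpr (by positivity))
  set c : ℝ := 1 - (2:ℝ) ^ (-1 / α) with hcdef
  have hc0 : 0 < c := by simp only [hcdef]; linarith
  have hs0 : 0 < s := by rw [hs]; positivity
  have hsΔ : Δ / s = c * ε := by
    rw [hs]; field_simp
  -- Integrability of |X|^α
  have hXa_meas : Measurable fun ω => |X ω| ^ α := (hX.abs.pow measurable_const)
  have hXa_nonneg : ∀ ω, 0 ≤ |X ω| ^ α := fun ω => rpow_nonneg (abs_nonneg _) α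
  have hXa_int : Integrable (fun ω => |X ω| ^ α) μ := by
    refine ⟨hXa_meas.aestronglyMeasurable, ?_⟩
    rw [hasFiniteIntegral_iff_ofReal (Filter.Eventually.of_forall hXa_nonneg)]
    exact lt_of_le_of_lt hmom ENNReal.ofReal_lt_top
  -- Integrability of |X|
  have hXabs_int : Integrable (fun ω => |X ω|) μ := by
    have hbd : Integrable (fun ω => |X ω| ^ α + 1) μ := hXa_int.add (integrable_const 1)
    refine Integrable.mono' hbd hX.abs.aestronglyMeasurable
      (Filter.Eventually.of_forall fun ω => ?_)
    rw [Real.norm_eq_abs, abs_abs]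
    rcases le_total (|X ω|) 1 with h | h
    · have := hXa_nonneg ω; linarith
    · have h1 : |X ω| ^ (1:ℝ) ≤ |X ω| ^ α := rpow_le_rpow_of_exponent_le h hα.le
      rw [rpow_one] at h1
      linarith
  -- E|X| ≤ Δ  via Jensen for t ↦ t^α
  have hEX : ∫ ω, |X ω| ∂μ ≤ Δ := by
    have hjen : (∫ ω, |X ω| ∂μ) ^ α ≤ ∫ ω, |X ω| ^ α ∂μ := by
      refine (convexOn_rpow hα.le).map_integral_le
        ((Real.continuous_rpow_const hα0.le).continuousOn) isClosed_Ici
        (Filter.Eventually.of_forall fun ω => Set.mem_Ici.mpr (abs_nonneg _)) hXabs_int ?_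
      exact hXa_int
    have hInt_le : ∫ ω, |X ω| ^ α ∂μ ≤ Δ ^ α := by
      rw [integral_eq_lintegral_of_nonneg_ae (Filter.Eventually.of_forall hXa_nonneg)
        hXa_meas.aestronglyMeasurable]
      calc (∫⁻ ω, ENNReal.ofReal (|X ω| ^ α) ∂μ).toReal
          ≤ (ENNReal.ofReal (Δ ^ α)).toReal := ENNReal.toReal_mono ENNReal.ofReal_ne_top hmom
        _ = Δ ^ α := ENNReal.toReal_ofReal (rpow_nonneg hΔ.le _)
    have h1 : (∫ ω, |X ω| ∂μ) ^ α ≤ Δ ^ α := hjen.trans hInt_le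
    have h0 : 0 ≤ ∫ ω, |X ω| ∂μ := integral_nonneg fun ω => abs_nonneg _
    exact (Real.rpow_le_rpow_iff h0 hΔ.le hα0).mp h1
  -- pointwise bound
  set a : ℝ := |y| / s + 1 with hadef
  have ha1 : (1:ℝ) ≤ a := by
    have := div_nonneg (abs_nonneg y) hs0.le
    simp only [hadef]; linarith
  have ha0 : (0:ℝ) < a := lt_of_lt_of_le one_pos ha1
  have hpt : ∀ ω, a ^ (-α) * Real.exp (-(α / s) * |X ω|) ≤ (|y - X ω| / s + 1) ^ (-α) := by
    intro ω
    set b : ℝ := |X ω| / s + 1 with hbdef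
    have hb1 : (1:ℝ) ≤ b := by
      have := div_nonneg (abs_nonneg (X ω)) hs0.le
      simp only [hbdef]; linarith
    have hb0 : (0:ℝ) < b := lt_of_lt_of_le one_pos hb1
    have ht0 : (0:ℝ) < |y - X ω| / s + 1 := by positivity
    have htab : |y - X ω| / s + 1 ≤ a * b := by
      have h1 : |y - X ω| ≤ |y| + |X ω| := abs_sub _ _
      have h2 : |y - X ω| / s ≤ |y| / s + |X ω| / s := by
        rw [← add_div]
        exact div_le_div_of_nonneg_right h1 hs0.le
      nlinarith [mul_nonneg (div_nonneg (abs_nonneg y) hs0.le) (div_nonneg (abs_nonneg (X ω)) hs0.le)]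
    have step1 : (a * b) ^ (-α) ≤ (|y - X ω| / s + 1) ^ (-α) :=
      rpow_le_rpow_of_nonpos ht0 htab (neg_nonpos.mpr hα0.le)
    have step2 : (a * b) ^ (-α) = a ^ (-α) * b ^ (-α) := Real.mul_rpow ha0.le hb0.le
    have step3 : Real.exp (-(α / s) * |X ω|) ≤ b ^ (-α) := by
      rw [rpow_def_of_pos hb0]
      apply Real.exp_le_exp.mpr
      have hlog : Real.log b ≤ |X ω| / s := by
        have := Real.log_le_sub_one_of_pos hb0
        simp only [hbdef] at this ⊢; linarith
      have : -(α / s) * |X ω| = (|X ω| / s) * (-α) := by ring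
      rw [this]
      exact mul_le_mul_of_nonpos_right hlog (by linarith)
    calc a ^ (-α) * Real.exp (-(α / s) * |X ω|) ≤ a ^ (-α) * b ^ (-α) := by
          exact mul_le_mul_of_nonneg_left step3 (rpow_nonneg ha0.le _)
      _ = (a * b) ^ (-α) := step2.symm
      _ ≤ _ := step1
  -- integrability of both integrands
  have hexp_meas : Measurable fun ω => Real.exp (-(α / s) * |X ω|) :=
    (measurable_const.mul hX.abs).exp
  have hexp_int : Integrable (fun ω => Real.exp (-(α / s) * |X ω|)) μ := by
    refine Integrable.mono' (integrable_const 1) hexp_meas.aestronglyMeasurable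
      (Filter.Eventually.of_forall fun ω => ?_)
    rw [Real.norm_eq_abs, abs_of_pos (Real.exp_pos _)]
    apply Real.exp_le_one_iff.mpr
    have : 0 ≤ (α / s) * |X ω| := mul_nonneg (by positivity) (abs_nonneg _)
    linarith
  have htgt_meas : Measurable fun ω => (|y - X ω| / s + 1) ^ (-α) :=
    (((measurable_const.sub hX).abs.div_const s).add_const 1).pow measurable_const
  have htgt_int : Integrable (fun ω => (|y - X ω| / s + 1) ^ (-α)) μ := by
    refine Integrable.mono' (integrable_const 1) htgt_meas.aestronglyMeasurable
      (Filter.Eventually.of_forall fun ω => ?_)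
    have ht1 : (1:ℝ) ≤ |y - X ω| / s + 1 := by
      nlinarith [div_nonneg (abs_nonneg (y - X ω)) hs0.le]
    rw [Real.norm_eq_abs, abs_of_nonneg (rpow_nonneg (by linarith) _)]
    exact rpow_le_one_of_one_le_of_nonpos ht1 (neg_nonpos.mpr hα0.le)
  -- Jensen for exp
  have hjen2 : Real.exp (∫ ω, -(α / s) * |X ω| ∂μ) ≤ ∫ ω, Real.exp (-(α / s) * |X ω|) ∂μ := by
    refine convexOn_exp.map_integral_le Real.continuous_exp.continuousOn isClosed_univ
      (Filter.Eventually.of_forall fun ω => Set.mem_univ _) (hXabs_int.const_mul _) ?_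
    exact hexp_int
  have hint_eq : ∫ ω, -(α / s) * |X ω| ∂μ = -(α / s) * ∫ ω, |X ω| ∂μ := integral_const_mul _ _
  have hexp_lb : Real.exp (-c * α * ε) ≤ ∫ ω, Real.exp (-(α / s) * |X ω|) ∂μ := by
    refine le_trans ?_ hjen2
    rw [hint_eq]
    apply Real.exp_le_exp.mpr
    have h1 : -(α / s) * ∫ ω, |X ω| ∂μ ≥ -(α / s) * Δ := by
      apply mul_le_mul_of_nonpos_left hEX
      simp only [neg_nonpos]; positivity
    have h2 : -(α / s) * Δ = -c * α * ε := by
      have : α / s * Δ = α * (Δ / s) := by ring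
      rw [neg_mul, this, hsΔ]; ring
    linarith [h1, h2 ▸ h1]
  -- assemble
  calc Real.exp (-c * α * ε) * a ^ (-α)
      ≤ (∫ ω, Real.exp (-(α / s) * |X ω|) ∂μ) * a ^ (-α) :=
        mul_le_mul_of_nonneg_right hexp_lb (rpow_nonneg ha0.le _)
    _ = ∫ ω, a ^ (-α) * Real.exp (-(α / s) * |X ω|) ∂μ := by
        rw [mul_comm, ← integral_const_mul]
    _ ≤ ∫ ω, (|y - X ω| / s + 1) ^ (-α) ∂μ :=
        integral_mono (hexp_int.const_mul _) htgt_int hpt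
end

section
/- Let α > 1, Δ > 0 and 0 < ε ≤ 1, and set s = Δ / ((1 − 2^{−1/α})·ε). Let X be a real random variable with E[|X|^α] ≤ Δ^α. Then for every y ∈ ℝ: E[(|y − X|/s + 1)^{−α}] ≤ exp(((2α − 1)/(α − 1))·ε) · (|y|/s + 1)^{−α}. -/
open MeasureTheory Real

lemma aux_convex {α t u : ℝ} (hα : 1 ≤ α) (ht : 0 < t) (hu : 0 ≤ u) :
    (1 + u) ^ α ≤ (1 + t) ^ (α - 1) + ((1 + t) / t) ^ (α - 1) * u ^ α := by
  have h1t : (0:ℝ) < 1 + t := by linarith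
  have hx : (1 + t : ℝ) ∈ Set.Ici (0:ℝ) := by simp [h1t.le]
  have hy : (u * ((1 + t) / t) : ℝ) ∈ Set.Ici (0:ℝ) := by
    have : (0:ℝ) ≤ (1+t)/t := by positivity
    simp [mul_nonneg hu this]
  have ha : (0:ℝ) ≤ 1 / (1 + t) := by positivity
  have hb : (0:ℝ) ≤ t / (1 + t) := by positivity
  have hab : 1 / (1 + t) + t / (1 + t) = 1 := by field_simp
  have key := (convexOn_rpow hα).2 hx hy ha hb hab
  have e1 : (1 / (1 + t)) • (1 + t) + (t / (1 + t)) • (u * ((1 + t) / t)) = 1 + u := by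
    simp only [smul_eq_mul]
    field_simp
  rw [e1] at key
  refine key.trans_eq ?_
  have e2 : (1 / (1 + t)) • ((1 + t) ^ α) = (1 + t) ^ (α - 1) := by
    rw [Real.rpow_sub_one h1t.ne', smul_eq_mul]
    field_simp
  have e3 : (t / (1 + t)) • ((u * ((1 + t) / t)) ^ α) = ((1 + t) / t) ^ (α - 1) * u ^ α := by
    rw [Real.mul_rpow hu (by positivity), smul_eq_mul,
      Real.rpow_sub_one (by positivity : ((1+t)/t : ℝ) ≠ 0)]
    field_simp
  rw [e2, e3]

lemma aux_pt {α s x y : ℝ} (hα : 0 < α) (hs : 0 < s) :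
    (|y - x| / s + 1) ^ (-α) ≤ (1 + |x| / s) ^ α * (|y| / s + 1) ^ (-α) := by
  obtain ⟨u, hu⟩ : ∃ u, u = |x| / s := ⟨_, rfl⟩
  obtain ⟨a, ha⟩ : ∃ a, a = |y| / s + 1 := ⟨_, rfl⟩
  obtain ⟨b, hb⟩ : ∃ b, b = |y - x| / s + 1 := ⟨_, rfl⟩
  rw [← hu, ← ha, ← hb]
  have hu0 : 0 ≤ u := by rw [hu]; positivity
  have ha0 : (0:ℝ) < a := by rw [ha]; positivity
  have hb1 : (1:ℝ) ≤ b := by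
    have : 0 ≤ |y - x| / s := by positivity
    rw [hb]; linarith [abs_nonneg (y - x), div_nonneg (abs_nonneg (y-x)) hs.le]
  have hb0 : (0:ℝ) < b := lt_of_lt_of_le one_pos hb1
  have h1u : (0:ℝ) < 1 + u := by linarith
  have hab : a ≤ b * (1 + u) := by
    have htri : |y| ≤ |y - x| + |x| := by
      calc |y| = |y - x + x| := by ring_nf
      _ ≤ |y - x| + |x| := abs_add_le _ _
    have h1 : |y| / s ≤ |y - x| / s + u := by
      rw [hu, ← add_div]; gcongr
    have h2 : u ≤ b * u := le_mul_of_one_le_left hu0 hb1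
    nlinarith
  have hba : a / (1 + u) ≤ b := (div_le_iff₀ h1u).2 hab
  calc b ^ (-α) ≤ (a / (1 + u)) ^ (-α) :=
        Real.rpow_le_rpow_of_nonpos (by positivity) hba (by linarith)
  _ = (1 + u) ^ α * a ^ (-α) := by
      rw [Real.div_rpow ha0.le h1u.le, Real.rpow_neg ha0.le, Real.rpow_neg h1u.le]
      field_simp

/-- Upper bound on the density ratio `f_{X+Y}(y)/f_Y(y)` of the zero-symmetric Pareto
mechanism: if `E[|X|^α] ≤ Δ^α` and `s = Δ/((1 - 2^{-1/α}) ε)`, then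
`E[(|y - X|/s + 1)^{-α}] ≤ exp(((2α-1)/(α-1)) ε) (|y|/s + 1)^{-α}`. -/
theorem stmt_15 {Ω : Type*} [MeasurableSpace Ω] (μ : Measure Ω) [IsProbabilityMeasure μ]
    (X : Ω → ℝ) (hX : Measurable X) (α Δ ε : ℝ) (hα : 1 < α) (hΔ : 0 < Δ)
    (hε0 : 0 < ε) (hε1 : ε ≤ 1) (s : ℝ) (hs : s = Δ / ((1 - (2 : ℝ) ^ (-1 / α)) * ε))
    (hmom : ∫⁻ ω, ENNReal.ofReal (|X ω| ^ α) ∂μ ≤ ENNReal.ofReal (Δ ^ α)) :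
    ∀ y : ℝ,
      ∫ ω, (|y - X ω| / s + 1) ^ (-α) ∂μ ≤
        Real.exp ((2 * α - 1) / (α - 1) * ε) * (|y| / s + 1) ^ (-α) := by
  intro y
  have hα0 : (0:ℝ) < α := by linarith
  have hneg : (-1 : ℝ) / α < 0 := div_neg_of_neg_of_pos (by norm_num) hα0
  set c : ℝ := 1 - (2:ℝ) ^ (-1 / α) with hc
  have hc0 : 0 < c := by
    have : (2:ℝ) ^ (-1 / α) < 1 := Real.rpow_lt_one_of_one_lt_of_neg one_lt_two hneg
    simp only [hc]; linarith
  have hcα : α * c ≤ 1 := by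
    have h2 : (2:ℝ) ^ (-1 / α) = Real.exp (Real.log 2 * (-1 / α)) :=
      Real.rpow_def_of_pos two_pos _
    have hlog2 : Real.log 2 ≤ 1 := by
      have := Real.log_le_sub_one_of_pos (two_pos (α := ℝ))
      linarith
    have hlog2' : 0 < Real.log 2 := Real.log_pos one_lt_two
    have : c ≤ Real.log 2 / α := by
      rw [hc, h2]
      have : Real.log 2 * (-1 / α) = -(Real.log 2 / α) := by ring
      rw [this]
      linarith [Real.add_one_le_exp (-(Real.log 2 / α))]
    calc α * c ≤ α * (Real.log 2 / α) := by
          exact mul_le_mul_of_nonneg_left this hα0.le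
    _ = Real.log 2 := by field_simp
    _ ≤ 1 := hlog2
  have hs0 : 0 < s := by rw [hs]; positivity
  set t : ℝ := c * ε with htdef
  have ht0 : 0 < t := mul_pos hc0 hε0
  have hΔs : Δ / s = t := by
    rw [hs]; field_simp
  have htα : α * t ≤ ε := by
    have : α * t = (α * c) * ε := by rw [htdef]; ring
    rw [this]
    nlinarith
  -- moment function
  have hXm : Measurable fun ω => |X ω| ^ α := by fun_prop
  have hXnn : ∀ ω, 0 ≤ |X ω| ^ α := fun ω => Real.rpow_nonneg (abs_nonneg _) _
  have hint : Integrable (fun ω => |X ω| ^ α) μ := by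
    refine ⟨hXm.aestronglyMeasurable, ?_⟩
    rw [hasFiniteIntegral_iff_ofReal (ae_of_all _ hXnn)]
    exact lt_of_le_of_lt hmom ENNReal.ofReal_lt_top
  have hM : ∫ ω, |X ω| ^ α ∂μ ≤ Δ ^ α := by
    rw [integral_eq_lintegral_of_nonneg_ae (ae_of_all _ hXnn) hXm.aestronglyMeasurable]
    exact ENNReal.toReal_le_of_le_ofReal (by positivity) hmom
  have hMnn : 0 ≤ ∫ ω, |X ω| ^ α ∂μ := integral_nonneg hXnn
  -- abbreviations
  set A : ℝ := (|y| / s + 1) ^ (-α) with hAdef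
  have hA0 : 0 ≤ A := Real.rpow_nonneg (by positivity) _
  set C1 : ℝ := (1 + t) ^ (α - 1) * A with hC1
  set C2 : ℝ := ((1 + t) / t) ^ (α - 1) / s ^ α * A with hC2
  have hC2nn : 0 ≤ C2 := by
    rw [hC2]
    have : (0:ℝ) ≤ ((1 + t) / t) ^ (α - 1) := Real.rpow_nonneg (by positivity) _
    positivity
  -- pointwise bound
  have hpt : ∀ ω, (|y - X ω| / s + 1) ^ (-α) ≤ C1 + C2 * |X ω| ^ α := by
    intro ω
    calc (|y - X ω| / s + 1) ^ (-α) ≤ (1 + |X ω| / s) ^ α * A := aux_pt hα0 hs0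
    _ ≤ ((1 + t) ^ (α - 1) + ((1 + t) / t) ^ (α - 1) * (|X ω| / s) ^ α) * A := by
        exact mul_le_mul_of_nonneg_right (aux_convex hα.le ht0 (by positivity)) hA0
    _ = C1 + C2 * |X ω| ^ α := by
        rw [Real.div_rpow (abs_nonneg _) hs0.le, hC1, hC2]
        ring
  -- integrability of lhs
  have hfm : Measurable fun ω => (|y - X ω| / s + 1) ^ (-α) := by fun_prop
  have hfint : Integrable (fun ω => (|y - X ω| / s + 1) ^ (-α)) μ := by
    refine (integrable_const (1:ℝ)).mono' hfm.aestronglyMeasurable (ae_of_all _ fun ω => ?_)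
    have hb1 : (1:ℝ) ≤ |y - X ω| / s + 1 := by
      have : (0:ℝ) ≤ |y - X ω| / s := by positivity
      linarith
    rw [Real.norm_eq_abs, abs_of_nonneg (Real.rpow_nonneg (by positivity) _)]
    exact Real.rpow_le_one_of_one_le_of_nonpos hb1 (by linarith)
  have hgint : Integrable (fun ω => C1 + C2 * |X ω| ^ α) μ :=
    (integrable_const C1).add (hint.const_mul C2)
  -- integrate
  have hIle : ∫ ω, (|y - X ω| / s + 1) ^ (-α) ∂μ ≤ C1 + C2 * ∫ ω, |X ω| ^ α ∂μ := by
    calc ∫ ω, (|y - X ω| / s + 1) ^ (-α) ∂μ ≤ ∫ ω, (C1 + C2 * |X ω| ^ α) ∂μ :=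
          integral_mono hfint hgint hpt
    _ = C1 + C2 * ∫ ω, |X ω| ^ α ∂μ := by
        rw [integral_add (integrable_const C1) (hint.const_mul C2), integral_const,
          integral_const_mul]
        simp
  -- final numeric bound
  have hkey : C1 + C2 * ∫ ω, |X ω| ^ α ∂μ ≤ (1 + t) ^ α * A := by
    have h1 : C1 + C2 * ∫ ω, |X ω| ^ α ∂μ ≤ C1 + C2 * Δ ^ α := by
      exact add_le_add_right (mul_le_mul_of_nonneg_left hM hC2nn) C1
    refine h1.trans ?_
    have hΔα : Δ ^ α / s ^ α = t ^ α := by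
      rw [← Real.div_rpow hΔ.le hs0.le, hΔs]
    have h2 : C1 + C2 * Δ ^ α = ((1 + t) ^ (α - 1) + ((1 + t) / t) ^ (α - 1) * t ^ α) * A := by
      rw [hC1, hC2, ← hΔα]
      ring
    rw [h2]
    have h3 : (1 + t) ^ (α - 1) + ((1 + t) / t) ^ (α - 1) * t ^ α = (1 + t) ^ α := by
      have e1 : ((1 + t) / t) ^ (α - 1) = (1 + t) ^ (α - 1) / t ^ (α - 1) :=
        Real.div_rpow (by positivity) ht0.le _
      have e2 : t ^ α = t ^ (α - 1) * t := by
        rw [← Real.rpow_add_one ht0.ne' (α - 1), sub_add_cancel]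
      have e3 : (1 + t) ^ α = (1 + t) ^ (α - 1) * (1 + t) := by
        rw [← Real.rpow_add_one (by positivity : (1 + t : ℝ) ≠ 0) (α - 1), sub_add_cancel]
      have ht0' : (t:ℝ) ^ (α - 1) ≠ 0 := (Real.rpow_pos_of_pos ht0 _).ne'
      rw [e1, e2, e3]
      field_simp
    rw [h3]
  have hexp : (1 + t) ^ α ≤ Real.exp ((2 * α - 1) / (α - 1) * ε) := by
    have h1 : (1 + t) ^ α ≤ Real.exp t ^ α :=
      Real.rpow_le_rpow (by positivity) (by linarith [Real.add_one_le_exp t]) hα0.le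
    have h2 : Real.exp t ^ α = Real.exp (t * α) := (Real.exp_mul t α).symm
    have h3 : t * α ≤ (2 * α - 1) / (α - 1) * ε := by
      have hfac : 1 ≤ (2 * α - 1) / (α - 1) := by
        rw [le_div_iff₀ (by linarith : (0:ℝ) < α - 1)]
        linarith
      calc t * α = α * t := mul_comm _ _
      _ ≤ ε := htα
      _ ≤ (2 * α - 1) / (α - 1) * ε := le_mul_of_one_le_left hε0.le hfac
    calc (1 + t) ^ α ≤ Real.exp t ^ α := h1
    _ = Real.exp (t * α) := h2
    _ ≤ Real.exp ((2 * α - 1) / (α - 1) * ε) := Real.exp_le_exp.2 h3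
  calc ∫ ω, (|y - X ω| / s + 1) ^ (-α) ∂μ ≤ C1 + C2 * ∫ ω, |X ω| ^ α ∂μ := hIle
  _ ≤ (1 + t) ^ α * A := hkey
  _ ≤ Real.exp ((2 * α - 1) / (α - 1) * ε) * A := mul_le_mul_of_nonneg_right hexp hA0
end
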